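/- arXiv:1604.01214 — 5 statements merged into one kernel-verified Lean document; each statement's English description precedes it below -/
import Mathlib

section
/- Let g be analytic on D and suppose T_g : H^∞ → H^∞ is bounded with operator norm ‖T_g‖. Then for every Möbius transformation φ of D onto itself, T_{g∘φ} : H^∞ → H^∞ is bounded with ‖T_{g∘φ}‖ ≤ 2‖T_g‖. -/
open Metric MeasureTheory

/-- The integral operator `T_g(f)(z) = ∫₀^z f(ζ) g'(ζ) dζ` along the segment from `0` to `z`. -/
noncomputable def Tg (g f : ℂ → ℂ) (z : ℂ) : ℂ :=
  z * ∫ t in (0:ℝ)..1, f ((t:ℂ) * z) * deriv g ((t:ℂ) * z)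

/-- `T_g` is bounded on `H^∞` with bound `M`: for every bounded analytic `f` on the disc,
`‖T_g f‖_∞ ≤ M · ‖f‖_∞` (expressed via sup bounds). -/
def TgBoundedBy (g : ℂ → ℂ) (M : ℝ) : Prop :=
  ∀ f : ℂ → ℂ, DifferentiableOn ℂ f (ball (0:ℂ) 1) →
    ∀ B : ℝ, (∀ z ∈ ball (0:ℂ) 1, ‖f z‖ ≤ B) →
      ∀ z ∈ ball (0:ℂ) 1, ‖Tg g f z‖ ≤ M * B

lemma denom_ne (a z : ℂ) (ha : a ∈ ball (0:ℂ) 1) (hz : z ∈ ball (0:ℂ) 1) :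
    (1 - (starRingEnd ℂ) a * z) ≠ 0 := by
  simp only [mem_ball, dist_zero_right] at ha hz
  intro h
  have h1 : ‖(starRingEnd ℂ) a * z‖ = 1 := by
    have : (starRingEnd ℂ) a * z = 1 := by linear_combination -h
    simp [this]
  rw [norm_mul, Complex.norm_conj] at h1
  nlinarith [norm_nonneg a, norm_nonneg z]

lemma normSq_identity (a z : ℂ) :
    Complex.normSq (1 - (starRingEnd ℂ) a * z) - Complex.normSq (a - z)
      = (1 - Complex.normSq a) * (1 - Complex.normSq z) := by
  simp only [Complex.normSq_apply, Complex.sub_re, Complex.sub_im, Complex.mul_re,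
    Complex.mul_im, Complex.one_re, Complex.one_im, Complex.conj_re, Complex.conj_im]
  ring

lemma mob_mem (a z : ℂ) (ha : a ∈ ball (0:ℂ) 1) (hz : z ∈ ball (0:ℂ) 1) :
    (a - z) / (1 - (starRingEnd ℂ) a * z) ∈ ball (0:ℂ) 1 := by
  have hd := denom_ne a z ha hz
  simp only [mem_ball, dist_zero_right] at *
  rw [norm_div, div_lt_one (norm_pos_iff.mpr hd)]
  have key := normSq_identity a z
  have h1 : Complex.normSq a < 1 := by
    rw [← Complex.sq_norm]; nlinarith [norm_nonneg a]
  have h2 : Complex.normSq z < 1 := by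
    rw [← Complex.sq_norm]; nlinarith [norm_nonneg z]
  have h3 : Complex.normSq (a - z) < Complex.normSq (1 - (starRingEnd ℂ) a * z) := by
    nlinarith
  have := Complex.sq_norm (a - z)
  have := Complex.sq_norm (1 - (starRingEnd ℂ) a * z)
  nlinarith [norm_nonneg (a-z), norm_nonneg (1 - (starRingEnd ℂ) a * z)]

lemma mob_sq (a z : ℂ) (ha : a ∈ ball (0:ℂ) 1) (hz : z ∈ ball (0:ℂ) 1) :
    (a - (a - z)/(1 - (starRingEnd ℂ) a * z)) /
      (1 - (starRingEnd ℂ) a * ((a - z)/(1 - (starRingEnd ℂ) a * z))) = z := by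
  have d1 := denom_ne a z ha hz
  have d2 := denom_ne a a ha ha
  have d3 : 1 - (starRingEnd ℂ) a * ((a - z)/(1 - (starRingEnd ℂ) a * z))
      = (1 - (starRingEnd ℂ) a * a)/(1 - (starRingEnd ℂ) a * z) := by
    field_simp; ring
  have d4 : a - (a - z)/(1 - (starRingEnd ℂ) a * z)
      = z * (1 - (starRingEnd ℂ) a * a)/(1 - (starRingEnd ℂ) a * z) := by
    rw [eq_div_iff d1, sub_mul, div_mul_cancel₀ _ d1]; ring
  rw [d3, d4]
  rw [mul_div_assoc]
  exact mul_div_cancel_right₀ z (div_ne_zero d2 d1)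

lemma primitive_hasDerivAt {h : ℂ → ℂ} (hd : DifferentiableOn ℂ h (ball (0:ℂ) 1))
    {z₀ : ℂ} (hz₀ : z₀ ∈ ball (0:ℂ) 1) :
    HasDerivAt (fun z => z * ∫ t in (0:ℝ)..1, h ((t:ℂ) * z)) (h z₀) z₀ := by
  simp only [mem_ball, dist_zero_right] at hz₀
  set r : ℝ := (‖z₀‖ + 1) / 2 with hr_def
  have hr1 : ‖z₀‖ < r := by simp only [hr_def]; linarith
  have hr2 : r < 1 := by simp only [hr_def]; linarith
  have hrpos : 0 < r := lt_of_le_of_lt (norm_nonneg z₀) hr1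
  have hsub : closedBall (0:ℂ) r ⊆ ball (0:ℂ) 1 := closedBall_subset_ball hr2
  set ε : ℝ := r - ‖z₀‖ with hε_def
  have hε : 0 < ε := by simp only [hε_def]; linarith
  -- points t*x stay in closedBall 0 r
  have hmem : ∀ x ∈ ball z₀ ε, ∀ t ∈ Set.Icc (0:ℝ) 1, (t:ℂ) * x ∈ closedBall (0:ℂ) r := by
    intro x hx t ht
    have hxr : ‖x‖ < r := by
      have h1 := mem_ball_iff_norm.mp hx
      have h2 : ‖x‖ - ‖z₀‖ ≤ ‖x - z₀‖ := norm_sub_norm_le x z₀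
      simp only [hε_def] at h1; linarith
    simp only [mem_closedBall, dist_zero_right, norm_mul]
    calc ‖(t:ℂ)‖ * ‖x‖ ≤ 1 * r := by
          refine mul_le_mul ?_ hxr.le (norm_nonneg x) zero_le_one
          simp only [Complex.norm_real, Real.norm_eq_abs, abs_of_nonneg ht.1]
          exact ht.2
      _ = r := one_mul r
  have hc : ContinuousOn h (ball (0:ℂ) 1) := hd.continuousOn
  have hdc : ContinuousOn (deriv h) (ball (0:ℂ) 1) :=
    ((hd.analyticOnNhd isOpen_ball).deriv).differentiableOn.continuousOn
  obtain ⟨C, hC⟩ : ∃ C, ∀ w ∈ closedBall (0:ℂ) r, ‖deriv h w‖ ≤ C :=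
    (isCompact_closedBall 0 r).exists_bound_of_continuousOn (hdc.mono hsub)
  have hC0 : 0 ≤ C := le_trans (norm_nonneg _) (hC 0 (mem_closedBall_self hrpos.le))
  have hIsub : Set.uIoc (0:ℝ) 1 ⊆ Set.Icc (0:ℝ) 1 := by
    rw [Set.uIoc_of_le zero_le_one]; exact Set.Ioc_subset_Icc_self
  have hcont : ∀ x ∈ ball z₀ ε, ContinuousOn (fun t : ℝ => h ((t:ℂ) * x)) (Set.Icc 0 1) :=
    fun x hx => hc.comp ((Complex.continuous_ofReal.mul continuous_const).continuousOn)
      (fun t ht => hsub (hmem x hx t ht))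
  have hcont' : ContinuousOn (fun t : ℝ => deriv h ((t:ℂ) * z₀) * (t:ℂ)) (Set.Icc 0 1) := by
    refine ContinuousOn.mul ?_ (Complex.continuous_ofReal.continuousOn)
    exact hdc.comp ((Complex.continuous_ofReal.mul continuous_const).continuousOn)
      (fun t ht => hsub (hmem z₀ (mem_ball_self hε) t ht))
  have main := intervalIntegral.hasDerivAt_integral_of_dominated_loc_of_deriv_le
    (F := fun (x : ℂ) (t : ℝ) => h ((t:ℂ) * x))
    (F' := fun (x : ℂ) (t : ℝ) => deriv h ((t:ℂ) * x) * (t:ℂ))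
    (x₀ := z₀) (a := (0:ℝ)) (b := 1) (μ := volume) (bound := fun _ => C) (s := ball z₀ ε) (ball_mem_nhds z₀ hε)
    ?_ ?_ ?_ ?_ ?_ ?_
  · obtain ⟨-, hG⟩ := main
    have hF := (hasDerivAt_id z₀).mul hG
    have int1 : IntervalIntegrable (fun t : ℝ => h ((t:ℂ) * z₀)) volume 0 1 := by
      apply ContinuousOn.intervalIntegrable
      rw [Set.uIcc_of_le zero_le_one]; exact hcont z₀ (mem_ball_self hε)
    have int2 : IntervalIntegrable (fun t : ℝ => z₀ * (deriv h ((t:ℂ) * z₀) * (t:ℂ)))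
        volume 0 1 := by
      apply ContinuousOn.intervalIntegrable
      rw [Set.uIcc_of_le zero_le_one]; exact continuousOn_const.mul hcont'
    have key : id z₀ * ∫ t in (0:ℝ)..1, deriv h ((t:ℂ) * z₀) * (t:ℂ) =
        (h z₀ - ∫ t in (0:ℝ)..1, h ((t:ℂ) * z₀)) := by
      simp only [id]
      rw [← intervalIntegral.integral_const_mul]
      have hFTC : ∀ t ∈ Set.uIcc (0:ℝ) 1,
          HasDerivAt (fun s : ℝ => (s:ℂ) * h ((s:ℂ) * z₀))
            (h ((t:ℂ) * z₀) + z₀ * (deriv h ((t:ℂ) * z₀) * (t:ℂ))) t := by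
        intro t ht
        rw [Set.uIcc_of_le zero_le_one] at ht
        have hmemt : (t:ℂ) * z₀ ∈ ball (0:ℂ) 1 := by
          simp only [mem_ball, dist_zero_right, norm_mul]
          calc ‖(t:ℂ)‖ * ‖z₀‖ ≤ 1 * ‖z₀‖ := by
                refine mul_le_mul_of_nonneg_right ?_ (norm_nonneg z₀)
                simp only [Complex.norm_real, Real.norm_eq_abs, abs_of_nonneg ht.1]; exact ht.2
            _ < 1 := by simpa using hz₀
        have c1 : HasDerivAt (fun s : ℝ => (s:ℂ)) 1 t := by
          exact Complex.ofRealCLM.hasDerivAt.congr_deriv (by simp)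
        have m1 : HasDerivAt (fun s : ℝ => (s:ℂ) * z₀) z₀ t := by
          simpa using c1.mul_const z₀
        have hh : HasDerivAt h (deriv h ((t:ℂ) * z₀)) ((t:ℂ) * z₀) :=
          (hd.differentiableAt (isOpen_ball.mem_nhds hmemt)).hasDerivAt
        have hw : HasDerivAt (fun s : ℝ => h ((s:ℂ) * z₀))
            (z₀ • deriv h ((t:ℂ) * z₀)) t := HasDerivAt.scomp t hh m1
        have := c1.mul hw
        exact this.congr_deriv (by simp only [smul_eq_mul]; ring)
      have intFTC : IntervalIntegrable
          (fun t : ℝ => h ((t:ℂ) * z₀) + z₀ * (deriv h ((t:ℂ) * z₀) * (t:ℂ))) volume 0 1 :=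
        int1.add int2
      have := intervalIntegral.integral_eq_sub_of_hasDerivAt hFTC intFTC
      rw [intervalIntegral.integral_add int1 int2] at this
      simp only [Complex.ofReal_one, Complex.ofReal_zero, one_mul, zero_mul] at this
      linear_combination this
    rw [key] at hF
    exact hF.congr_deriv (by ring)
  · filter_upwards [ball_mem_nhds z₀ hε] with x hx
    exact ((hcont x hx).mono hIsub).aestronglyMeasurable measurableSet_uIoc
  · apply ContinuousOn.intervalIntegrable
    rw [Set.uIcc_of_le zero_le_one]; exact hcont z₀ (mem_ball_self hε)
  · exact (hcont'.mono hIsub).aestronglyMeasurable measurableSet_uIoc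
  · refine Filter.Eventually.of_forall fun t ht x hx => ?_
    have ht' : t ∈ Set.Icc (0:ℝ) 1 := hIsub ht
    have h1 : ‖deriv h ((t:ℂ) * x)‖ ≤ C := hC _ (hmem x hx t ht')
    have h2 : ‖(t:ℂ)‖ ≤ 1 := by
      simp only [Complex.norm_real, Real.norm_eq_abs, abs_of_nonneg ht'.1]; exact ht'.2
    calc ‖deriv h ((t:ℂ) * x) * (t:ℂ)‖ = ‖deriv h ((t:ℂ) * x)‖ * ‖(t:ℂ)‖ := norm_mul _ _
      _ ≤ C * 1 := mul_le_mul h1 h2 (norm_nonneg _) hC0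
      _ = C := mul_one C
  · exact intervalIntegrable_const
  · refine Filter.Eventually.of_forall fun t ht x hx => ?_
    have ht' : t ∈ Set.Icc (0:ℝ) 1 := hIsub ht
    have hx1 : (t:ℂ) * x ∈ ball (0:ℂ) 1 := hsub (hmem x hx t ht')
    have hh : HasDerivAt h (deriv h ((t:ℂ) * x)) ((t:ℂ) * x) :=
      (hd.differentiableAt (isOpen_ball.mem_nhds hx1)).hasDerivAt
    have hi : HasDerivAt (fun y : ℂ => (t:ℂ) * y) (t:ℂ) x := by
      simpa using (hasDerivAt_id x).const_mul (t:ℂ)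
    exact hh.comp x hi

theorem stmt2 (g : ℂ → ℂ) (hg : DifferentiableOn ℂ g (ball (0:ℂ) 1))
    (M : ℝ) (hM : TgBoundedBy g M) :
    ∀ ξ a : ℂ, ‖ξ‖ = 1 → a ∈ ball (0:ℂ) 1 →
      TgBoundedBy (fun z => g (ξ * ((a - z) / (1 - (starRingEnd ℂ) a * z)))) (2 * M) := by
  intro ξ a hξ ha f hf B hB z hz
  have h0 : (0:ℂ) ∈ ball (0:ℂ) 1 := by simp
  set φ : ℂ → ℂ := fun w => ξ * ((a - w) / (1 - (starRingEnd ℂ) a * w)) with hφ_def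
  set ψ : ℂ → ℂ :=
    fun w => (a - (starRingEnd ℂ) ξ * w) /
      (1 - (starRingEnd ℂ) a * ((starRingEnd ℂ) ξ * w)) with hψ_def
  have hξξ : (starRingEnd ℂ) ξ * ξ = 1 := by
    have hn : Complex.normSq ξ = 1 := by rw [Complex.normSq_eq_norm_sq, hξ]; norm_num
    rw [mul_comm, Complex.mul_conj, hn, Complex.ofReal_one]
  -- membership facts
  have hφmem : ∀ w ∈ ball (0:ℂ) 1, φ w ∈ ball (0:ℂ) 1 := by
    intro w hw
    have := mob_mem a w ha hw
    simp only [mem_ball, dist_zero_right] at this ⊢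
    simpa [hφ_def, map_mul, hξ] using this
  have hconjmem : ∀ w ∈ ball (0:ℂ) 1, (starRingEnd ℂ) ξ * w ∈ ball (0:ℂ) 1 := by
    intro w hw
    simp only [mem_ball, dist_zero_right] at hw ⊢
    simpa [map_mul, Complex.norm_conj, hξ] using hw
  have hψmem : ∀ w ∈ ball (0:ℂ) 1, ψ w ∈ ball (0:ℂ) 1 := by
    intro w hw
    exact mob_mem a _ ha (hconjmem w hw)
  -- involution
  have hψφ : ∀ w ∈ ball (0:ℂ) 1, ψ (φ w) = w := by
    intro w hw
    have key : (starRingEnd ℂ) ξ * φ w = (a - w) / (1 - (starRingEnd ℂ) a * w) := by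
      simp only [hφ_def]
      rw [← mul_assoc, hξξ, one_mul]
    simp only [hψ_def, key]
    exact mob_sq a w ha hw
  -- differentiability
  have hφdiff : DifferentiableOn ℂ φ (ball (0:ℂ) 1) := by
    apply DifferentiableOn.const_mul
    exact DifferentiableOn.div ((differentiableOn_const a).sub differentiableOn_id)
      ((differentiableOn_const 1).sub ((differentiableOn_const _).mul differentiableOn_id))
      (fun w hw => denom_ne a w ha hw)
  have hψdiff : DifferentiableOn ℂ ψ (ball (0:ℂ) 1) := by
    apply DifferentiableOn.div
    · exact (differentiableOn_const a).sub ((differentiableOn_const _).mul differentiableOn_id)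
    · exact (differentiableOn_const 1).sub
        ((differentiableOn_const _).mul ((differentiableOn_const _).mul differentiableOn_id))
    · intro w hw
      exact denom_ne a _ ha (hconjmem w hw)
  -- analyticity / differentiability of derived functions
  have hgφ : DifferentiableOn ℂ (fun w => g (φ w)) (ball (0:ℂ) 1) :=
    hg.comp hφdiff hφmem
  have hderiv_gφ : DifferentiableOn ℂ (deriv (fun w => g (φ w))) (ball (0:ℂ) 1) :=
    ((hgφ.analyticOnNhd isOpen_ball).deriv).differentiableOn
  have hderiv_g : DifferentiableOn ℂ (deriv g) (ball (0:ℂ) 1) :=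
    ((hg.analyticOnNhd isOpen_ball).deriv).differentiableOn
  have hfψ : DifferentiableOn ℂ (fun w => f (ψ w)) (ball (0:ℂ) 1) := hf.comp hψdiff hψmem
  have hh1 : DifferentiableOn ℂ (fun w => f (ψ w) * deriv g w) (ball (0:ℂ) 1) :=
    hfψ.mul hderiv_g
  have hh2 : DifferentiableOn ℂ (fun w => f w * deriv (fun u => g (φ u)) w) (ball (0:ℂ) 1) :=
    hf.mul hderiv_gφ
  -- the difference has zero derivative on the ball
  have hT : ∀ w ∈ ball (0:ℂ) 1,
      HasDerivAt (fun u => Tg (fun v => g (φ v)) f u - Tg g (fun v => f (ψ v)) (φ u)) 0 w := by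
    intro w hw
    have hφat : DifferentiableAt ℂ φ w := hφdiff.differentiableAt (isOpen_ball.mem_nhds hw)
    have hA : HasDerivAt (fun u => Tg (fun v => g (φ v)) f u)
        (f w * deriv (fun v => g (φ v)) w) w := by
      have := primitive_hasDerivAt hh2 hw
      simpa [Tg] using this
    have hprim : HasDerivAt (fun u => Tg g (fun v => f (ψ v)) u)
        (f (ψ (φ w)) * deriv g (φ w)) (φ w) := by
      have := primitive_hasDerivAt hh1 (hφmem w hw)
      simpa [Tg] using this
    have hB2 : HasDerivAt (fun u => Tg g (fun v => f (ψ v)) (φ u))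
        (f (ψ (φ w)) * deriv g (φ w) * deriv φ w) w := by
      have := hprim.comp w hφat.hasDerivAt
      simpa [Function.comp_def] using this
    have hchain : deriv (fun v => g (φ v)) w = deriv g (φ w) * deriv φ w := by
      have hgat : DifferentiableAt ℂ g (φ w) :=
        hg.differentiableAt (isOpen_ball.mem_nhds (hφmem w hw))
      have hcomp : HasDerivAt (fun v => g (φ v)) (deriv g (φ w) * deriv φ w) w := by
        simpa [Function.comp_def] using hgat.hasDerivAt.comp w hφat.hasDerivAt
      exact hcomp.deriv
    have hval := hA.sub hB2
    have e : f w * deriv (fun v => g (φ v)) w - f (ψ (φ w)) * deriv g (φ w) * deriv φ w = 0 := by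
      rw [hψφ w hw, hchain]; ring
    rw [e] at hval
    exact hval
  -- constancy on the ball
  have hconst : (fun u => Tg (fun v => g (φ v)) f u - Tg g (fun v => f (ψ v)) (φ u)) z
      = (fun u => Tg (fun v => g (φ v)) f u - Tg g (fun v => f (ψ v)) (φ u)) 0 := by
    apply (convex_ball (0:ℂ) 1).is_const_of_fderivWithin_eq_zero
      (fun w hw => ((hT w hw).differentiableAt).differentiableWithinAt) ?_ hz h0
    intro w hw
    rw [fderivWithin_of_isOpen isOpen_ball hw, ((hT w hw).hasFDerivAt).fderiv]
    ext
    simp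
  simp only at hconst
  have h20 : Tg (fun v => g (φ v)) f 0 = 0 := by simp [Tg]
  rw [h20] at hconst
  have heq : Tg (fun v => g (φ v)) f z
      = Tg g (fun v => f (ψ v)) (φ z) - Tg g (fun v => f (ψ v)) (φ 0) := by
    linear_combination hconst
  have habs : ∀ w ∈ ball (0:ℂ) 1, ‖Tg g (fun v => f (ψ v)) w‖ ≤ M * B :=
    hM _ hfψ B (fun w hw => hB _ (hψmem w hw))
  show ‖Tg (fun v => g (φ v)) f z‖ ≤ 2 * M * B
  rw [heq]
  calc ‖Tg g (fun v => f (ψ v)) (φ z) - Tg g (fun v => f (ψ v)) (φ 0)‖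
      ≤ ‖Tg g (fun v => f (ψ v)) (φ z)‖
        + ‖Tg g (fun v => f (ψ v)) (φ 0)‖ := by
        simpa using
          norm_sub_le (Tg g (fun v => f (ψ v)) (φ z)) (Tg g (fun v => f (ψ v)) (φ 0))
    _ ≤ M * B + M * B := add_le_add (habs _ (hφmem z hz)) (habs _ (hφmem 0 h0))
    _ = 2 * M * B := by ring
end

section
/- For the atomic singular inner function S(z) = exp((z+1)/(z−1)), the radial variation is uniformly bounded: sup over θ ∈ (−π,π] of ∫₀¹ |S'(te^{iθ})| dt < ∞. Explicitly, ∫₀¹ (2/|1−te^{iθ}|²)·exp(−(1−t²)/|1−te^{iθ}|²) dt is bounded by a constant independent of θ. -/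
open MeasureTheory Real

/-- The atomic singular inner function `S(z) = exp((z+1)/(z-1))`. -/
noncomputable def atomicS (z : ℂ) : ℂ := Complex.exp ((z + 1) / (z - 1))

/-- The integrand `(2/|1-te^{iθ}|²)·exp(−(1−t²)/|1−te^{iθ}|²)`. -/
noncomputable def Fint (θ t : ℝ) : ℝ :=
  (2 / ‖1 - (t:ℂ) * Complex.exp (θ * Complex.I)‖ ^ 2) *
    Real.exp (-(1 - t ^ 2) / ‖1 - (t:ℂ) * Complex.exp (θ * Complex.I)‖ ^ 2)

lemma exp_neg_le' {u : ℝ} (hu : 0 < u) : Real.exp (-u) ≤ 4 / u ^ 2 := by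
  have h1 : u/2 + 1 ≤ Real.exp (u/2) := Real.add_one_le_exp (u/2)
  have h2 : u^2/4 ≤ Real.exp u := by
    have h3 : (u/2+1) * (u/2+1) ≤ Real.exp (u/2) * Real.exp (u/2) :=
      mul_le_mul h1 h1 (by positivity) (le_of_lt (Real.exp_pos _))
    rw [← Real.exp_add] at h3
    have h4 : u/2 + u/2 = u := by ring
    rw [h4] at h3
    nlinarith
  rw [Real.exp_neg]
  rw [inv_le_comm₀ (Real.exp_pos u) (by positivity)]
  rw [inv_div]
  linarith

lemma abs_sq_eq (θ t : ℝ) :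
    ‖1 - (t:ℂ) * Complex.exp (θ * Complex.I)‖ ^ 2 =
      (1 - t)^2 + t * ‖1 - Complex.exp (θ * Complex.I)‖ ^ 2 := by
  rw [Complex.sq_norm, Complex.sq_norm]
  simp only [Complex.normSq_apply, Complex.sub_re, Complex.sub_im, Complex.mul_re, Complex.mul_im,
    Complex.one_re, Complex.one_im, Complex.ofReal_re, Complex.ofReal_im,
    Complex.exp_ofReal_mul_I_re, Complex.exp_ofReal_mul_I_im]
  have h := Real.sin_sq_add_cos_sq θ
  linear_combination (t^2 - t) * h

lemma c_le_two (θ : ℝ) : ‖1 - Complex.exp (θ * Complex.I)‖ ≤ 2 := by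
  calc ‖1 - Complex.exp (θ * Complex.I)‖
      ≤ ‖(1:ℂ)‖ + ‖Complex.exp (θ * Complex.I)‖ := by
        simpa using norm_sub_le (1:ℂ) (Complex.exp (θ * Complex.I))
    _ = 2 := by rw [Complex.norm_exp_ofReal_mul_I]; norm_num

lemma Fint_nonneg (θ t : ℝ) : 0 ≤ Fint θ t := by
  unfold Fint; positivity

lemma Fint_measurable (θ : ℝ) : Measurable (Fint θ) := by
  unfold Fint
  have h : Continuous fun t : ℝ => ‖1 - (t:ℂ) * Complex.exp (θ * Complex.I)‖ ^ 2 := by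
    exact (continuous_norm.comp (by fun_prop)).pow 2
  exact (measurable_const.div h.measurable).mul
    ((((measurable_const.sub (measurable_id.pow_const 2)).neg).div h.measurable).exp)

lemma Fint_le_A {θ t : ℝ} (ht0 : 0 ≤ t) (ht1 : t ≤ 1)
    (hc : ‖1 - Complex.exp (θ * Complex.I)‖ ≤ 1 - t) : Fint θ t ≤ 32 := by
  set c := ‖1 - Complex.exp (θ * Complex.I)‖ with hcdef
  have hc0 : 0 ≤ c := norm_nonneg _
  rcases eq_or_lt_of_le ht1 with h1 | h1
  · -- t = 1, c = 0
    have hceq : c = 0 := le_antisymm (by simpa [← h1] using hc) hc0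
    have hexp : Complex.exp (θ * Complex.I) = 1 := by
      have := norm_eq_zero.mp hceq
      have := sub_eq_zero.mp this
      exact this.symm
    have habs : ‖1 - (t:ℂ) * Complex.exp (θ * Complex.I)‖ = 0 := by
      rw [hexp, h1]
      simp
    simp [Fint, habs]
  · -- t < 1
    have ha : 0 < 1 - t := by linarith
    set r2 := ‖1 - (t:ℂ) * Complex.exp (θ * Complex.I)‖ ^ 2 with hr2def
    have hid : r2 = (1 - t)^2 + t * c^2 := abs_sq_eq θ t
    have hlow : (1-t)^2 ≤ r2 := by nlinarith [mul_nonneg ht0 (sq_nonneg c)]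
    have hhigh : r2 ≤ 2*(1-t)^2 := by nlinarith [mul_nonneg ht0 (sq_nonneg c), sq_nonneg c]
    have hr2 : 0 < r2 := lt_of_lt_of_le (by positivity) hlow
    have hA : 1 - t ≤ 1 - t^2 := by nlinarith
    have h1t2 : 0 < 1 - t^2 := by nlinarith
    have hu : 0 < (1 - t^2)/r2 := div_pos h1t2 hr2
    have e1 : Real.exp (-(1 - t^2)/r2) ≤ 16*(1-t)^2 := by
      have h2 := exp_neg_le' hu
      rw [neg_div]
      refine h2.trans ?_
      rw [div_pow, div_div_eq_mul_div, div_le_iff₀ (by positivity : (0:ℝ) < (1-t^2)^2)]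
      nlinarith [sq_nonneg (1-t), sq_nonneg r2, mul_le_mul hhigh hhigh (by positivity) (by positivity)]
    have e2 : 2/r2 ≤ 2/(1-t)^2 := by gcongr
    calc Fint θ t = (2/r2) * Real.exp (-(1 - t^2)/r2) := by rw [Fint]
      _ ≤ (2/(1-t)^2) * (16*(1-t)^2) := by
          apply mul_le_mul e2 e1 (le_of_lt (Real.exp_pos _)) (by positivity)
      _ = 32 := by field_simp; ring

lemma Fint_le_B {θ t : ℝ} (ht0 : 0 ≤ t) (ht1 : t < 1)
    (hc : 1 - t ≤ ‖1 - Complex.exp (θ * Complex.I)‖) :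
    Fint θ t ≤ 16 * ‖1 - Complex.exp (θ * Complex.I)‖ ^ 2 / (1 - t)^2 := by
  set c := ‖1 - Complex.exp (θ * Complex.I)‖ with hcdef
  have hc0 : 0 ≤ c := norm_nonneg _
  have ha : 0 < 1 - t := by linarith
  set r2 := ‖1 - (t:ℂ) * Complex.exp (θ * Complex.I)‖ ^ 2 with hr2def
  have hid : r2 = (1 - t)^2 + t * c^2 := abs_sq_eq θ t
  have hlow : (1-t)^2 ≤ r2 := by nlinarith [mul_nonneg ht0 (sq_nonneg c)]
  have hhigh : r2 ≤ 2*c^2 := by nlinarith [sq_nonneg c]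
  have hr2 : 0 < r2 := lt_of_lt_of_le (by positivity) hlow
  have h1t2 : 0 < 1 - t^2 := by nlinarith
  have hA : 1 - t ≤ 1 - t^2 := by nlinarith
  have hu : 0 < (1 - t^2)/r2 := div_pos h1t2 hr2
  have e1 : Real.exp (-(1 - t^2)/r2) ≤ 4 * r2^2 / (1-t)^2 := by
    have h2 := exp_neg_le' hu
    rw [neg_div]
    refine h2.trans ?_
    rw [div_pow, div_div_eq_mul_div]
    have hsq : (1-t)^2 ≤ (1-t^2)^2 := by nlinarith
    gcongr
  calc Fint θ t = (2/r2) * Real.exp (-(1 - t^2)/r2) := by rw [Fint]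
    _ ≤ (2/r2) * (4 * r2^2/(1-t)^2) := mul_le_mul_of_nonneg_left e1 (by positivity)
    _ = 8 * r2/(1-t)^2 := by field_simp; ring
    _ ≤ 8 * (2*c^2)/(1-t)^2 := by gcongr
    _ = 16 * c^2/(1-t)^2 := by ring

lemma Fint_le_C {θ t : ℝ} (ht0 : 0 ≤ t) (ht1 : t ≤ 1)
    (hc : 0 < ‖1 - Complex.exp (θ * Complex.I)‖) :
    Fint θ t ≤ 8 / ‖1 - Complex.exp (θ * Complex.I)‖ ^ 2 := by
  set c := ‖1 - Complex.exp (θ * Complex.I)‖ with hcdef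
  have hc2 : c ≤ 2 := c_le_two θ
  set r2 := ‖1 - (t:ℂ) * Complex.exp (θ * Complex.I)‖ ^ 2 with hr2def
  have hid : r2 = (1 - t)^2 + t * c^2 := abs_sq_eq θ t
  have hlow : c^2/4 ≤ r2 := by
    nlinarith [sq_nonneg (1-t), sq_nonneg c, mul_nonneg ht0 (sq_nonneg c),
      mul_nonneg (sub_nonneg.mpr ht1) (sq_nonneg c), sq_nonneg ((1-t) - c^2/2),
      mul_nonneg (mul_nonneg (sub_nonneg.mpr ht1) hc.le) (sub_nonneg.mpr hc2)]
  have hr2 : 0 < r2 := lt_of_lt_of_le (by positivity) hlow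
  have hexp : Real.exp (-(1 - t^2)/r2) ≤ 1 := by
    rw [Real.exp_le_one_iff]
    apply div_nonpos_of_nonpos_of_nonneg (by nlinarith) hr2.le
  calc Fint θ t = (2/r2) * Real.exp (-(1 - t^2)/r2) := by rw [Fint]
    _ ≤ (2/(c^2/4)) * 1 := by
        apply mul_le_mul (by gcongr) hexp (le_of_lt (Real.exp_pos _)) (by positivity)
    _ = 8 / c^2 := by rw [mul_one]; rw [div_div_eq_mul_div]; ring

lemma deriv_atomicS {z : ℂ} (hz : z ≠ 1) :
    deriv atomicS z = Complex.exp ((z + 1) / (z - 1)) * (-2 / (z - 1) ^ 2) := by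
  have hz' : z - 1 ≠ 0 := sub_ne_zero.mpr hz
  have h1 : HasDerivAt (fun w : ℂ => (w + 1) / (w - 1)) (-2 / (z - 1) ^ 2) z := by
    have h := (((hasDerivAt_id z).add_const 1).div ((hasDerivAt_id z).sub_const 1) hz')
    refine h.congr_deriv ?_
    simp only [id]
    field_simp
    ring
  have h2 := h1.cexp
  have h3 : atomicS = fun w : ℂ => Complex.exp ((w + 1) / (w - 1)) := rfl
  rw [h3, h2.deriv]

lemma deriv_abs_eq {θ t : ℝ} (ht0 : 0 < t) (ht1 : t < 1) :
    ‖deriv atomicS ((t:ℂ) * Complex.exp (θ * Complex.I))‖ = Fint θ t := by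
  set z : ℂ := (t:ℂ) * Complex.exp (θ * Complex.I) with hzdef
  have habsz : ‖z‖ = t := by
    rw [hzdef, norm_mul, Complex.norm_exp_ofReal_mul_I, Complex.norm_real, Real.norm_eq_abs, abs_of_pos ht0, mul_one]
  have hz : z ≠ 1 := by
    intro h
    rw [h] at habsz
    simp at habsz
    linarith [habsz]
  rw [deriv_atomicS hz]
  rw [norm_mul, Complex.norm_exp, norm_div, norm_pow]
  have hre : ((z + 1) / (z - 1)).re = -(1 - t^2) / ‖1 - z‖ ^ 2 := by
    rw [Complex.div_re]
    have hns : Complex.normSq (z - 1) = ‖1 - z‖ ^ 2 := by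
      rw [Complex.sq_norm, ← Complex.normSq_neg, neg_sub]
    have hz2 : Complex.normSq z = t^2 := by
      rw [← Complex.sq_norm, habsz]
    rw [hns]
    have : (z+1).re * (z-1).re + (z+1).im * (z-1).im = Complex.normSq z - 1 := by
      simp [Complex.normSq_apply, Complex.add_re, Complex.sub_re, Complex.add_im, Complex.sub_im]
      ring
    rw [← add_div, this, hz2]
    ring_nf
  rw [hre]
  have habs2 : ‖z - 1‖ = ‖1 - z‖ := norm_sub_rev z 1
  rw [habs2]
  have h2 : ‖(-2 : ℂ)‖ = 2 := by simp
  rw [h2]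
  simp only [Fint]
  ring

lemma Fint_intervalIntegrable (θ : ℝ) {p q B : ℝ}
    (h : ∀ t ∈ Set.uIoc p q, Fint θ t ≤ B) :
    IntervalIntegrable (Fint θ) volume p q := by
  rw [intervalIntegrable_iff]
  refine Integrable.mono' (g := fun _ => B) ?_ ?_ ?_
  · exact integrableOn_const measure_Ioc_lt_top.ne
  · exact ((Fint_measurable θ).aestronglyMeasurable).restrict
  · rw [ae_restrict_iff' measurableSet_uIoc]
    filter_upwards with t ht
    rw [Real.norm_of_nonneg (Fint_nonneg θ t)]
    exact h t ht

lemma main_est (θ : ℝ) : (∫ t in (0:ℝ)..1, Fint θ t) ≤ 200 := by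
  set c := ‖1 - Complex.exp (θ * Complex.I)‖ with hcdef
  have hc0 : 0 ≤ c := norm_nonneg _
  rcases eq_or_lt_of_le hc0 with hc | hc
  · -- c = 0 : Fint ≤ 32 on [0,1]
    have hb : ∀ t ∈ Set.Icc (0:ℝ) 1, Fint θ t ≤ 32 := by
      intro t ht
      refine Fint_le_A ht.1 ht.2 ?_
      rw [← hcdef, ← hc]
      linarith [ht.2]
    have hint : IntervalIntegrable (Fint θ) volume 0 1 := by
      refine Fint_intervalIntegrable θ (B := 32) ?_
      intro t ht
      rw [Set.uIoc_of_le (by norm_num : (0:ℝ) ≤ 1)] at ht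
      exact hb t ⟨ht.1.le, ht.2⟩
    calc (∫ t in (0:ℝ)..1, Fint θ t) ≤ ∫ _t in (0:ℝ)..1, (32:ℝ) :=
          intervalIntegral.integral_mono_on (by norm_num) hint intervalIntegrable_const hb
      _ = 32 := by simp
      _ ≤ 200 := by norm_num
  · have hbC : ∀ t ∈ Set.Icc (0:ℝ) 1, Fint θ t ≤ 8/c^2 := by
      intro t ht
      exact Fint_le_C ht.1 ht.2 hc
    rcases le_or_gt (1/4 : ℝ) c with hc4 | hc4
    · -- c ≥ 1/4
      have hb : ∀ t ∈ Set.Icc (0:ℝ) 1, Fint θ t ≤ 128 := by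
        intro t ht
        refine (hbC t ht).trans ?_
        rw [div_le_iff₀ (by positivity)]
        nlinarith
      have hint : IntervalIntegrable (Fint θ) volume 0 1 := by
        refine Fint_intervalIntegrable θ (B := 128) ?_
        intro t ht
        rw [Set.uIoc_of_le (by norm_num : (0:ℝ) ≤ 1)] at ht
        exact hb t ⟨ht.1.le, ht.2⟩
      calc (∫ t in (0:ℝ)..1, Fint θ t) ≤ ∫ _t in (0:ℝ)..1, (128:ℝ) :=
            intervalIntegral.integral_mono_on (by norm_num) hint intervalIntegrable_const hb
        _ = 128 := by simp
        _ ≤ 200 := by norm_num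
    · -- 0 < c < 1/4
      set p : ℝ := 1 - c with hpdef
      set q : ℝ := 1 - 3*c^2 with hqdef
      have h0p : (0:ℝ) ≤ p := by rw [hpdef]; linarith
      have hpq : p ≤ q := by rw [hpdef, hqdef]; nlinarith
      have hq1 : q < 1 := by rw [hqdef]; nlinarith
      have hIcc1 : Set.Icc (0:ℝ) p ⊆ Set.Icc 0 1 := Set.Icc_subset_Icc le_rfl (by linarith)
      have hIcc2 : Set.Icc p q ⊆ Set.Icc 0 1 := Set.Icc_subset_Icc h0p hq1.le
      have hIcc3 : Set.Icc q 1 ⊆ Set.Icc 0 1 := Set.Icc_subset_Icc (h0p.trans hpq) le_rfl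
      have hint1 : IntervalIntegrable (Fint θ) volume 0 p := by
        refine Fint_intervalIntegrable θ (B := 8/c^2) ?_
        intro t ht
        rw [Set.uIoc_of_le h0p] at ht
        exact hbC t (hIcc1 ⟨ht.1.le, ht.2⟩)
      have hint2 : IntervalIntegrable (Fint θ) volume p q := by
        refine Fint_intervalIntegrable θ (B := 8/c^2) ?_
        intro t ht
        rw [Set.uIoc_of_le hpq] at ht
        exact hbC t (hIcc2 ⟨ht.1.le, ht.2⟩)
      have hint3 : IntervalIntegrable (Fint θ) volume q 1 := by
        refine Fint_intervalIntegrable θ (B := 8/c^2) ?_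
        intro t ht
        rw [Set.uIoc_of_le hq1.le] at ht
        exact hbC t (hIcc3 ⟨ht.1.le, ht.2⟩)
      have hsplit : (∫ t in (0:ℝ)..1, Fint θ t) =
          (∫ t in (0:ℝ)..p, Fint θ t) + (∫ t in p..q, Fint θ t) + (∫ t in q..1, Fint θ t) := by
        rw [intervalIntegral.integral_add_adjacent_intervals hint1 hint2,
          intervalIntegral.integral_add_adjacent_intervals (hint1.trans hint2) hint3]
      have hI1 : (∫ t in (0:ℝ)..p, Fint θ t) ≤ 32 := by
        have hb1 : ∀ t ∈ Set.Icc (0:ℝ) p, Fint θ t ≤ 32 := by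
          intro t ht
          refine Fint_le_A ht.1 (by linarith [ht.2, hc.le] : t ≤ 1) ?_
          have := ht.2
          rw [hpdef] at this
          linarith
        calc (∫ t in (0:ℝ)..p, Fint θ t) ≤ ∫ _t in (0:ℝ)..p, (32:ℝ) :=
              intervalIntegral.integral_mono_on h0p hint1 intervalIntegrable_const hb1
          _ = p * 32 := by rw [intervalIntegral.integral_const]; simp
          _ ≤ 32 := by nlinarith [hc.le]
      have hI2 : (∫ t in p..q, Fint θ t) ≤ 16/3 := by
        have hcne : c ≠ 0 := ne_of_gt hc
        set g : ℝ → ℝ := fun x => 16 * c^2 / (1-x)^2 with hgdef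
        have hgcont : ContinuousOn g (Set.uIcc p q) := by
          rw [Set.uIcc_of_le hpq]
          apply ContinuousOn.div continuousOn_const (by fun_prop)
          intro x hx
          have h1x : (0:ℝ) < 1 - x := by
            have : x < 1 := lt_of_le_of_lt hx.2 hq1
            linarith
          positivity
        have hgint : IntervalIntegrable g volume p q := hgcont.intervalIntegrable
        have hmono : (∫ t in p..q, Fint θ t) ≤ ∫ t in p..q, g t := by
          apply intervalIntegral.integral_mono_on hpq hint2 hgint
          intro x hx
          have hx1 : x < 1 := lt_of_le_of_lt hx.2 hq1
          have hx0 : 0 ≤ x := le_trans h0p hx.1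
          have hxc : 1 - x ≤ c := by
            have := hx.1
            rw [hpdef] at this
            linarith
          exact Fint_le_B hx0 hx1 hxc
        have hftc : (∫ t in p..q, g t) = 16*c^2*(1-q)⁻¹ - 16*c^2*(1-p)⁻¹ := by
          have hderiv : ∀ x ∈ Set.uIcc p q,
              HasDerivAt (fun y => 16*c^2*(1-y)⁻¹) (g x) x := by
            intro x hx
            rw [Set.uIcc_of_le hpq] at hx
            have hx1 : (1:ℝ) - x ≠ 0 := by
              have : x < 1 := lt_of_le_of_lt hx.2 hq1
              intro h; linarith [(sub_eq_zero.mp h)]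
            have hd1 : HasDerivAt (fun y : ℝ => 1 - y) (-1) x := by
              simpa using (hasDerivAt_id x).const_sub 1
            have hd2 := hd1.inv hx1
            have hd3 := hd2.const_mul (16*c^2)
            refine hd3.congr_deriv ?_
            rw [hgdef]
            field_simp
          exact intervalIntegral.integral_eq_sub_of_hasDerivAt hderiv hgint
        rw [hftc] at hmono
        refine hmono.trans ?_
        have e1 : (1:ℝ) - q = 3*c^2 := by rw [hqdef]; ring
        have e2 : (1:ℝ) - p = c := by rw [hpdef]; ring
        rw [e1, e2]
        have e3 : 16*c^2*(3*c^2)⁻¹ = 16/3 := by field_simp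
        rw [e3]
        have : 0 ≤ 16*c^2*c⁻¹ := by positivity
        linarith
      have hI3 : (∫ t in q..1, Fint θ t) ≤ 24 := by
        have hb3 : ∀ t ∈ Set.Icc q 1, Fint θ t ≤ 8/c^2 := fun t ht => hbC t (hIcc3 ht)
        calc (∫ t in q..1, Fint θ t) ≤ ∫ _t in q..1, (8/c^2 : ℝ) :=
              intervalIntegral.integral_mono_on hq1.le hint3 intervalIntegrable_const hb3
          _ = (1 - q) * (8/c^2) := by rw [intervalIntegral.integral_const]; simp
          _ = 24 := by
              rw [hqdef]
              have hcne : c ≠ 0 := ne_of_gt hc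
              field_simp
              ring
          _ ≤ 24 := le_rfl
      rw [hsplit]
      linarith

theorem stmt4 :
    ∃ C : ℝ, ∀ θ : ℝ,
      (∫ t in (0:ℝ)..1, ‖deriv atomicS ((t:ℂ) * Complex.exp (θ * Complex.I))‖) ≤ C ∧
      (∫ t in (0:ℝ)..1,
        (2 / ‖1 - (t:ℂ) * Complex.exp (θ * Complex.I)‖ ^ 2) *
          Real.exp (-(1 - t ^ 2) / ‖1 - (t:ℂ) * Complex.exp (θ * Complex.I)‖ ^ 2))
        ≤ C := by
  refine ⟨200, fun θ => ?_⟩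
  have h2 : (∫ t in (0:ℝ)..1, Fint θ t) ≤ 200 := main_est θ
  have h1 : (∫ t in (0:ℝ)..1,
      ‖deriv atomicS ((t:ℂ) * Complex.exp (θ * Complex.I))‖) =
      ∫ t in (0:ℝ)..1, Fint θ t := by
    apply intervalIntegral.integral_congr_ae
    have hone : ∀ᵐ t : ℝ, t ≠ (1:ℝ) := by
      have hs : {a : ℝ | ¬ a ≠ 1} = {1} := by ext x; simp
      rw [MeasureTheory.ae_iff, hs]
      exact measure_singleton 1
    filter_upwards [hone] with t ht hmem
    rw [Set.uIoc_of_le (by norm_num : (0:ℝ) ≤ 1)] at hmem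
    exact deriv_abs_eq hmem.1 (lt_of_le_of_ne hmem.2 ht)
  constructor
  · rw [h1]; exact h2
  · exact h2
end

section
/- Let g(z) = a₀ + Σ_{k≥1} a_k z^{n_k} be a lacunary series with Hadamard gaps (n_{k+1}/n_k ≥ λ > 1 for all k). Then g ∈ H^∞ if and only if Σ_k |a_k| < ∞. -/
open Metric Complex Finset MeasureTheory

noncomputable section Stmt5Aux

local notation "conj'" => (starRingEnd ℂ)

/-- Orthogonality of exponentials on the circle. -/
lemma ortho (m : ℤ) (hm : m ≠ 0) : (∫ θ in (0:ℝ)..(2*Real.pi), Complex.exp (m * θ * I)) = 0 := by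
  have hc : (m : ℂ) * I ≠ 0 := by
    simp [Complex.ext_iff, I_ne_zero, hm]
  have h2 : ∀ θ : ℝ, Complex.exp (m * θ * I) = Complex.exp ((m * I) * θ) := fun θ => by ring_nf
  simp only [h2]
  rw [integral_exp_mul_complex hc]
  have : ((m:ℂ) * I) * (2*Real.pi) = m * (2 * Real.pi * I) := by push_cast; ring
  simp [this, Complex.exp_int_mul_two_pi_mul_I]

lemma ortho' (m : ℤ) : (∫ θ in (0:ℝ)..(2*Real.pi), Complex.exp (m * θ * I))
    = if m = 0 then (2*Real.pi : ℝ) else 0 := by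
  by_cases hm : m = 0
  · simp [hm]
  · simp [hm, ortho m hm]

lemma norm_aux (w : ℂ) (x : ℝ) : ‖w * Complex.exp (x * I)‖ = ‖w‖ := by
  rw [norm_mul]
  simp [Complex.norm_exp]

lemma fourierCoeff_of_hasSum (G : ℝ → ℂ) (c : ℕ → ℂ) (ρ : ℝ) (hρ0 : 0 ≤ ρ)
    (hsum : Summable (fun t => ‖c t‖ * ρ^t))
    (hG : ∀ θ : ℝ, HasSum (fun t => c t * (ρ:ℂ)^t * Complex.exp (t * θ * I)) (G θ))
    (m : ℤ) :
    ∫ θ in (0:ℝ)..(2*Real.pi), G θ * Complex.exp (m * θ * I)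
      = if 0 ≤ -m then (2*Real.pi : ℝ) * c (-m).toNat * (ρ:ℂ)^((-m).toNat) else 0 := by
  have hpi : (0:ℝ) ≤ 2*Real.pi := by positivity
  set F : ℕ → ℝ → ℂ := fun t θ => c t * (ρ:ℂ)^t * Complex.exp (((t:ℤ) + m) * θ * I) with hF
  have hFcont : ∀ t, Continuous (F t) := by
    intro t
    apply Continuous.mul continuous_const
    apply Complex.continuous_exp.comp
    fun_prop
  have hnorm : ∀ t θ, ‖F t θ‖ = ‖c t‖ * ρ^t := by
    intro t θ
    have : ((t:ℤ):ℂ) * θ * I + (m:ℂ) * θ * I = (((t:ℤ) + m):ℂ) * θ * I := by push_cast; ring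
    rw [hF]
    simp only
    rw [show ((((t:ℤ) + m):ℂ)) * θ * I = (((((t:ℤ):ℝ) + m) * θ : ℝ):ℂ) * I by push_cast; ring]
    rw [norm_aux]
    simp [norm_mul, norm_pow, Complex.norm_real, Real.norm_eq_abs, _root_.abs_of_nonneg hρ0]
  -- pointwise HasSum of the integrand
  have hGS : ∀ θ : ℝ, HasSum (fun t => F t θ) (G θ * Complex.exp (m * θ * I)) := by
    intro θ
    have h := (hG θ).mul_right (Complex.exp (m * θ * I))
    have he : (fun t : ℕ => c t * (ρ:ℂ)^t * Complex.exp (t*θ*I) * Complex.exp ((m:ℂ)*θ*I))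
        = fun t => F t θ := by
      funext t
      rw [hF]
      simp only
      rw [mul_assoc (c t * (ρ:ℂ)^t), ← Complex.exp_add]
      congr 2
      push_cast; ring
    rwa [he] at h
  have h1 : ∫ θ in (0:ℝ)..(2*Real.pi), G θ * Complex.exp (m * θ * I)
      = ∑' t : ℕ, ∫ θ in (0:ℝ)..(2*Real.pi), F t θ := by
    rw [intervalIntegral.integral_of_le hpi]
    have hInt : ∀ t : ℕ, Integrable (F t) (volume.restrict (Set.Ioc (0:ℝ) (2*Real.pi))) :=
      fun t => (hFcont t).integrableOn_Ioc
    have hIntNorm : Summable (fun t => ∫ θ, ‖F t θ‖ ∂(volume.restrict (Set.Ioc (0:ℝ) (2*Real.pi)))) := by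
      have : (fun t => ∫ θ, ‖F t θ‖ ∂(volume.restrict (Set.Ioc (0:ℝ) (2*Real.pi))))
          = fun t => (2*Real.pi) * (‖c t‖ * ρ^t) := by
        funext t
        simp only [hnorm t]
        rw [MeasureTheory.integral_const]
        simp [Real.volume_Ioc, ENNReal.toReal_ofReal hpi, Real.pi_nonneg]
      rw [this]
      exact hsum.mul_left _
    have hswap := MeasureTheory.integral_tsum_of_summable_integral_norm hInt hIntNorm
    simp only [intervalIntegral.integral_of_le hpi]
    rw [hswap]
    have : ∀ θ, G θ * Complex.exp (m * θ * I) = ∑' t, F t θ := fun θ => ((hGS θ).tsum_eq).symm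
    exact MeasureTheory.integral_congr_ae (Filter.Eventually.of_forall this)
  -- now evaluate each term
  have h2 : ∀ t : ℕ, (∫ θ in (0:ℝ)..(2*Real.pi), F t θ)
      = if ((t:ℤ) + m) = 0 then c t * (ρ:ℂ)^t * ((2*Real.pi:ℝ):ℂ) else 0 := by
    intro t
    rw [hF]
    simp only
    have ho := ortho' ((t:ℤ)+m)
    push_cast at ho
    rw [intervalIntegral.integral_const_mul]
    push_cast
    rw [ho]
    by_cases h : ((t:ℤ) + m) = 0 <;> simp [h]
  rw [h1]
  by_cases hm : 0 ≤ -m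
  · have ht0 : ((((-m).toNat : ℕ):ℤ) + m) = 0 := by omega
    rw [tsum_eq_single ((-m).toNat) ?_]
    · rw [h2, if_pos ht0]
      rw [if_pos hm]; push_cast
      ring
    · intro t ht
      rw [h2, if_neg]
      intro hc
      apply ht
      omega
  · rw [if_neg hm]
    have hz : (fun t : ℕ => ∫ θ in (0:ℝ)..(2*Real.pi), F t θ) = fun _ => 0 := by
      funext t
      rw [h2, if_neg]
      omega
    rw [hz, tsum_zero]

/-- Sum of the first `N` exponents. -/
def Bb (ν : ℕ → ℕ) (N : ℕ) : ℤ := ∑ j ∈ Finset.range N, (ν j : ℤ)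

/-- Fourier coefficients of the Riesz product `∏_{j<N} (1 + Re (u j * e^{i ν j θ}))`. -/
def rp (ν : ℕ → ℕ) (u : ℕ → ℂ) : ℕ → ℤ → ℂ
  | 0 => fun m => if m = 0 then 1 else 0
  | (N+1) => fun m => rp ν u N m + (u N / 2) * rp ν u N (m - ν N)
      + (conj' (u N) / 2) * rp ν u N (m + ν N)

variable (ν : ℕ → ℕ) (u : ℕ → ℂ)

lemma Bb_nonneg (N : ℕ) : 0 ≤ Bb ν N := by
  apply Finset.sum_nonneg; intro j _; positivity

lemma rp_support : ∀ N : ℕ, ∀ m : ℤ, Bb ν N < |m| → rp ν u N m = 0 := by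
  intro N
  induction N with
  | zero =>
    intro m hm
    have : m ≠ 0 := by
      intro h; simp [h, Bb] at hm
    simp [rp, this]
  | succ N ih =>
    intro m hm
    have hB : Bb ν (N+1) = Bb ν N + (ν N : ℤ) := by
      simp [Bb, Finset.sum_range_succ]
    have h1 : rp ν u N m = 0 := by
      apply ih; refine lt_of_le_of_lt ?_ hm
      rw [hB]; have := Bb_nonneg ν N; omega
    have habs : |(ν N : ℤ)| = (ν N : ℤ) := abs_of_nonneg (by positivity)
    have h2 : rp ν u N (m - ν N) = 0 := by
      apply ih
      have := abs_sub_abs_le_abs_sub m ((ν N : ℤ))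
      rw [habs] at this; rw [hB] at hm; omega
    have h3 : rp ν u N (m + ν N) = 0 := by
      apply ih
      have := abs_sub_abs_le_abs_sub m (-(ν N : ℤ))
      rw [abs_neg, habs, sub_neg_eq_add] at this; rw [hB] at hm; omega
    simp [rp, h1, h2, h3]

lemma rp_eval (N : ℕ) (θ : ℝ) :
    ∑ m ∈ Finset.Icc (-(Bb ν N)) (Bb ν N), rp ν u N m * Complex.exp (m * θ * I)
      = ∏ j ∈ Finset.range N,
        (1 + u j / 2 * Complex.exp ((ν j : ℤ) * θ * I)
           + conj' (u j) / 2 * Complex.exp ((-(ν j : ℤ)) * θ * I)) := by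
  induction N with
  | zero =>
    simp [Bb, rp]
  | succ N ih =>
    have hB : Bb ν (N+1) = Bb ν N + (ν N : ℤ) := by
      simp [Bb, Finset.sum_range_succ]
    set B := Bb ν N with hBdef
    have hB0 : 0 ≤ B := Bb_nonneg ν N
    have hν0 : (0:ℤ) ≤ (ν N : ℤ) := by positivity
    set c : ℤ := (ν N : ℤ) with hc
    -- the generic shifted sum computation
    have key : ∀ d : ℤ, |d| ≤ c →
        ∑ m ∈ Finset.Icc (-(B + c)) (B + c), rp ν u N (m - d) * Complex.exp (m * θ * I)
        = (∑ m ∈ Finset.Icc (-B) B, rp ν u N m * Complex.exp (m * θ * I))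
            * Complex.exp (d * θ * I) := by
      intro d hd
      have habs : -c ≤ d ∧ d ≤ c := abs_le.mp hd
      have hsub : Finset.Icc (-B + d) (B + d) ⊆ Finset.Icc (-(B+c)) (B+c) := by
        apply Finset.Icc_subset_Icc <;> omega
      rw [← Finset.sum_subset hsub]
      · have hmap : Finset.Icc (-B + d) (B + d)
            = Finset.map (addRightEmbedding d) (Finset.Icc (-B) B) := by
          rw [Finset.map_add_right_Icc]
        rw [hmap, Finset.sum_map, Finset.sum_mul]
        apply Finset.sum_congr rfl
        intro t _
        simp only [addRightEmbedding_apply, add_sub_cancel_right]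
        rw [show (((t + d) : ℤ):ℂ) * (θ:ℂ) * I = ↑t * ↑θ * I + ↑d * ↑θ * I by push_cast; ring,
          Complex.exp_add, ← mul_assoc]
      · intro m _ hm
        have : B < |m - d| := by
          simp only [Finset.mem_Icc, not_and_or, not_le] at hm
          rcases hm with h | h
          · rw [abs_sub_comm, _root_.abs_of_nonneg (by omega : (0:ℤ) ≤ d - m)]; omega
          · rw [_root_.abs_of_nonneg (by omega : (0:ℤ) ≤ m - d)]; omega
        rw [rp_support ν u N _ this, zero_mul]
    have key0 :
        ∑ m ∈ Finset.Icc (-(B + c)) (B + c), rp ν u N m * Complex.exp (m * θ * I)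
        = ∑ m ∈ Finset.Icc (-B) B, rp ν u N m * Complex.exp (m * θ * I) := by
      have := key 0 (by simpa using hν0)
      simpa using this
    rw [Finset.prod_range_succ, ← ih, hB]
    simp only [rp, add_mul, Finset.sum_add_distrib]
    rw [← hc, key0]
    have k1 := key c (le_of_eq (_root_.abs_of_nonneg hν0))
    have k2 := key (-c) (by rw [abs_neg]; exact le_of_eq (_root_.abs_of_nonneg hν0))
    simp only [sub_neg_eq_add] at k2
    push_cast at k2
    simp only [mul_assoc, ← Finset.mul_sum] at k1 k2 ⊢
    rw [k1, k2]
    push_cast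
    ring

section Gap
variable {q : ℝ} (hq : 3 ≤ q) (hν : ∀ j, 1 ≤ ν j) (hgrow : ∀ j, q * ν j ≤ ν (j+1))

include hq hν hgrow

lemma nu_mono : ∀ {j k : ℕ}, j ≤ k → (ν j : ℝ) ≤ ν k := by
  intro j k h
  induction k with
  | zero => simp_all
  | succ k ih =>
    rcases h.lt_or_eq with h' | h'
    · have h1 := ih (Nat.lt_succ_iff.mp h')
      have h2 := hgrow k
      have h3 : (1:ℝ) ≤ ν k := by exact_mod_cast hν k
      nlinarith
    · rw [h']

lemma nu_lt : ∀ {j N : ℕ}, j < N → q * (ν j : ℝ) ≤ ν N := by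
  intro j N h
  calc q * (ν j : ℝ) ≤ ν (j+1) := hgrow j
    _ ≤ ν N := nu_mono ν hq hν hgrow h

lemma Bb_le (N : ℕ) : (q - 1) * (Bb ν N : ℝ) ≤ ν N := by
  induction N with
  | zero =>
    simp only [Bb, Finset.range_zero, Finset.sum_empty, Int.cast_zero, mul_zero]
    have : (1:ℝ) ≤ ν 0 := by exact_mod_cast hν 0
    linarith
  | succ N ih =>
    have hB : (Bb ν (N+1) : ℝ) = (Bb ν N : ℝ) + (ν N : ℝ) := by
      simp [Bb, Finset.sum_range_succ]
    have h2 := hgrow N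
    rw [hB]
    nlinarith

lemma Bb_lt (N : ℕ) : Bb ν N < (ν N : ℤ) := by
  have h1 := Bb_le ν hq hν hgrow N
  have h2 : (0:ℝ) ≤ (Bb ν N : ℝ) := by exact_mod_cast Bb_nonneg ν N
  have h3 : (1:ℝ) ≤ ν N := by exact_mod_cast hν N
  have : (Bb ν N : ℝ) < (ν N : ℝ) := by nlinarith
  exact_mod_cast this

lemma rp_zero (N : ℕ) : rp ν u N 0 = 1 := by
  induction N with
  | zero => simp [rp]
  | succ N ih =>
    have hlt := Bb_lt ν hq hν hgrow N
    have h1 : rp ν u N (0 - (ν N : ℤ)) = 0 := by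
      apply rp_support; rw [zero_sub, abs_neg, _root_.abs_of_nonneg (by positivity)]; exact hlt
    have h2 : rp ν u N (0 + (ν N : ℤ)) = 0 := by
      apply rp_support; rw [zero_add, _root_.abs_of_nonneg (by positivity)]; exact hlt
    simp only [rp, h1, h2, ih]
    ring

lemma rp_diag (N : ℕ) : ∀ j < N, rp ν u N (-(ν j : ℤ)) = conj' (u j) / 2 := by
  induction N with
  | zero => intro j hj; omega
  | succ N ih =>
    intro j hj
    have hlt := Bb_lt ν hq hν hgrow N
    have hBle := Bb_le ν hq hν hgrow N
    have hBz : 0 ≤ Bb ν N := Bb_nonneg ν N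
    have hB0 : (0:ℝ) ≤ (Bb ν N : ℝ) := by exact_mod_cast Bb_nonneg ν N
    have hνN : (1:ℝ) ≤ ν N := by exact_mod_cast hν N
    rcases Nat.lt_succ_iff_lt_or_eq.mp hj with hj' | hj'
    · -- old index
      have hνj : q * (ν j : ℝ) ≤ ν N := nu_lt ν hq hν hgrow hj'
      have hνj1 : (1:ℝ) ≤ ν j := by exact_mod_cast hν j
      have h2 : rp ν u N (-(ν j : ℤ) - (ν N : ℤ)) = 0 := by
        apply rp_support
        rw [show -(ν j : ℤ) - (ν N : ℤ) = -((ν j : ℤ) + ν N) by ring, abs_neg,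
          _root_.abs_of_nonneg (by positivity)]
        have : (0:ℤ) ≤ ν j := by positivity
        omega
      have h3 : rp ν u N (-(ν j : ℤ) + (ν N : ℤ)) = 0 := by
        apply rp_support
        have hR : (Bb ν N : ℝ) < (ν N : ℝ) - (ν j : ℝ) := by nlinarith
        have hZ : Bb ν N < (ν N : ℤ) - (ν j : ℤ) := by exact_mod_cast hR
        rw [show -(ν j : ℤ) + (ν N : ℤ) = (ν N : ℤ) - ν j by ring,
          _root_.abs_of_nonneg (by omega)]
        exact hZ
      simp only [rp, h2, h3, ih j hj']
      ring
    · -- new index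
      rw [hj']
      have h1 : rp ν u N (-(ν N : ℤ)) = 0 := by
        apply rp_support
        rw [abs_neg, _root_.abs_of_nonneg (by positivity)]; exact hlt
      have h2 : rp ν u N (-(ν N : ℤ) - (ν N : ℤ)) = 0 := by
        apply rp_support
        rw [show -(ν N : ℤ) - (ν N : ℤ) = -((ν N:ℤ) + ν N) by ring, abs_neg,
          _root_.abs_of_nonneg (by positivity)]
        omega
      have h3 : rp ν u N (-(ν N : ℤ) + (ν N : ℤ)) = 1 := by
        rw [neg_add_cancel]; exact rp_zero ν u hq hν hgrow N
      simp only [rp, h1, h2, h3]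
      ring

lemma rp_offdiag {lam : ℝ} (hlam : 1 < lam) (hql : lam < (q - 1) * (lam - 1))
    (N : ℕ) (v : ℕ) (hv1 : 1 ≤ v)
    (hsep : ∀ j < N, lam * v ≤ ν j ∨ lam * ν j ≤ v) :
    rp ν u N (-(v : ℤ)) = 0 := by
  induction N with
  | zero =>
    simp only [rp]
    have : -(v:ℤ) ≠ 0 := by
      have : 1 ≤ (v:ℤ) := by exact_mod_cast hv1
      omega
    simp [this]
  | succ N ih =>
    have hlt := Bb_lt ν hq hν hgrow N
    have hBle := Bb_le ν hq hν hgrow N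
    have hBz : 0 ≤ Bb ν N := Bb_nonneg ν N
    have hB0 : (0:ℝ) ≤ (Bb ν N : ℝ) := by exact_mod_cast Bb_nonneg ν N
    have hνN : (1:ℝ) ≤ ν N := by exact_mod_cast hν N
    have hv1' : (1:ℝ) ≤ v := by exact_mod_cast hv1
    have h1 : rp ν u N (-(v:ℤ)) = 0 := ih (fun j hj => hsep j (Nat.lt_succ_of_lt hj))
    have h2 : rp ν u N (-(v:ℤ) - (ν N : ℤ)) = 0 := by
      apply rp_support
      rw [show -(v:ℤ) - (ν N : ℤ) = -((v:ℤ) + ν N) by ring, abs_neg,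
        _root_.abs_of_nonneg (by positivity)]
      have : (0:ℤ) ≤ v := by positivity
      omega
    have h3 : rp ν u N (-(v:ℤ) + (ν N : ℤ)) = 0 := by
      apply rp_support
      have hR : (Bb ν N : ℝ) < |(ν N : ℝ) - (v : ℝ)| := by
        rcases hsep N (Nat.lt_succ_self N) with hc | hc
        · rw [_root_.abs_of_nonneg (by nlinarith)]
          nlinarith
        · rw [abs_sub_comm, _root_.abs_of_nonneg (by nlinarith)]
          nlinarith
      have hZ : Bb ν N < |(ν N : ℤ) - (v : ℤ)| := by
        have : ((|(ν N : ℤ) - (v:ℤ)| : ℤ) : ℝ) = |(ν N : ℝ) - (v:ℝ)| := by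
          push_cast [Int.cast_abs]; ring_nf
        exact_mod_cast (by rw [this]; exact hR : ((Bb ν N : ℤ):ℝ) < ((|(ν N : ℤ) - (v:ℤ)| : ℤ) : ℝ))
      rw [show -(v:ℤ) + (ν N : ℤ) = (ν N : ℤ) - v by ring]
      exact hZ
    simp only [rp, h1, h2, h3]
    ring

lemma nu_strict : ∀ {j k : ℕ}, j < k → ν j < ν k := by
  intro j k h
  have h1 := nu_lt ν hq hν hgrow h
  have h2 : (1:ℝ) ≤ ν j := by exact_mod_cast hν j
  have : (ν j : ℝ) < ν k := by nlinarith
  exact_mod_cast this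

lemma classBound (c : ℕ → ℂ) {ρ : ℝ} (hρ0 : 0 ≤ ρ)
    {lam : ℝ} (hlam : 1 < lam) (hql : lam < (q - 1) * (lam - 1))
    (hsum : Summable (fun t => ‖c t‖ * ρ^t))
    (G : ℝ → ℂ) (hGcont : Continuous G)
    (hG : ∀ θ : ℝ, HasSum (fun t => c t * (ρ:ℂ)^t * Complex.exp (t * θ * I)) (G θ))
    {M : ℝ} (hM : ∀ θ, ‖G θ‖ ≤ M)
    (hu : ∀ j, ‖u j‖ = 1)
    (hcu : ∀ j, conj' (u j) * c (ν j) = ((‖c (ν j)‖ : ℝ) : ℂ))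
    (N : ℕ)
    (hoff : ∀ v : ℕ, 1 ≤ v → c v ≠ 0 → ∀ j < N, v = ν j ∨ lam * v ≤ ν j ∨ lam * ν j ≤ v) :
    ∑ j ∈ Finset.range N, ‖c (ν j)‖ * ρ^(ν j) ≤ 2*(M + ‖c 0‖) := by
  have hpi : (0:ℝ) ≤ 2*Real.pi := by positivity
  have hM0 : 0 ≤ M := le_trans (by positivity) (hM 0)
  set B := Bb ν N with hBdef
  set P : ℝ → ℝ := fun θ => ∏ j ∈ Finset.range N,
    (1 + (u j * Complex.exp (((ν j : ℝ) * θ : ℝ) * I)).re) with hPdef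
  have hP0 : ∀ θ, 0 ≤ P θ := by
    intro θ
    apply Finset.prod_nonneg
    intro j _
    have h1 : |(u j * Complex.exp (((ν j : ℝ) * θ : ℝ) * I)).re|
        ≤ ‖u j * Complex.exp (((ν j : ℝ) * θ : ℝ) * I)‖ :=
      Complex.abs_re_le_norm _
    have h2 : ‖u j * Complex.exp (((ν j : ℝ) * θ : ℝ) * I)‖ = 1 := by
      rw [norm_mul, hu j, Complex.norm_exp_ofReal_mul_I, mul_one]
    rw [h2] at h1
    have := neg_abs_le ((u j * Complex.exp (((ν j : ℝ) * θ : ℝ) * I)).re)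
    linarith
  have hPcont : Continuous P := by
    apply continuous_finset_prod
    intro j _
    have : Continuous fun θ : ℝ => u j * Complex.exp (((ν j : ℝ) * θ : ℝ) * I) := by
      apply Continuous.mul continuous_const
      apply Complex.continuous_exp.comp
      fun_prop
    exact (continuous_const.add (Complex.continuous_re.comp this))
  have hPC : ∀ θ : ℝ, ((P θ : ℝ) : ℂ)
      = ∑ m ∈ Finset.Icc (-B) B, rp ν u N m * Complex.exp (m * θ * I) := by
    intro θ
    rw [rp_eval]
    rw [hPdef]
    simp only
    rw [Complex.ofReal_prod]
    apply Finset.prod_congr rfl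
    intro j _
    rw [Complex.ofReal_add, Complex.ofReal_one]
    set w : ℂ := u j * Complex.exp (((ν j : ℝ) * θ : ℝ) * I) with hw
    have hre : ((w.re : ℝ) : ℂ) = (w + conj' w) / 2 := by
      rw [Complex.add_conj]
      push_cast
      ring
    have hconjw : conj' w = conj' (u j) * Complex.exp (-((((ν j : ℝ) * θ : ℝ):ℂ) * I)) := by
      rw [hw, map_mul, ← Complex.exp_conj]
      congr 2
      simp [Complex.conj_ofReal]
    have harg1 : ((((ν j : ℝ) * θ : ℝ)):ℂ) * I = ((ν j : ℤ):ℂ) * (θ:ℂ) * I := by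
      push_cast; ring
    have harg2 : -(((((ν j : ℝ) * θ : ℝ)):ℂ) * I) = ((-(ν j : ℤ) :ℤ):ℂ) * (θ:ℂ) * I := by
      push_cast; ring
    rw [hre, hconjw, hw]
    push_cast
    ring_nf
  -- Fourier coefficients of G
  have hE := fourierCoeff_of_hasSum G c ρ hρ0 hsum hG
  -- integrability
  have hIG : ∀ m : ℤ, IntervalIntegrable (fun θ : ℝ => G θ * Complex.exp (m * θ * I))
      MeasureTheory.volume 0 (2*Real.pi) := by
    intro m
    apply Continuous.intervalIntegrable
    apply hGcont.mul
    apply Complex.continuous_exp.comp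
    fun_prop
  -- main integral expansion
  have hexp : ∫ θ in (0:ℝ)..(2*Real.pi), G θ * ((P θ : ℝ) : ℂ)
      = ∑ m ∈ Finset.Icc (-B) B, rp ν u N m *
          ∫ θ in (0:ℝ)..(2*Real.pi), G θ * Complex.exp (m * θ * I) := by
    have h1 : ∀ θ : ℝ, G θ * ((P θ : ℝ) : ℂ)
        = ∑ m ∈ Finset.Icc (-B) B, rp ν u N m * (G θ * Complex.exp (m * θ * I)) := by
      intro θ
      rw [hPC θ, Finset.mul_sum]
      apply Finset.sum_congr rfl
      intro m _
      ring
    rw [intervalIntegral.integral_congr (fun θ _ => h1 θ)]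
    rw [intervalIntegral.integral_finset_sum]
    · apply Finset.sum_congr rfl
      intro m _
      rw [intervalIntegral.integral_const_mul]
    · intro m _
      exact (hIG m).const_mul _
  -- the total mass of P
  have hPmass : ∫ θ in (0:ℝ)..(2*Real.pi), P θ = 2*Real.pi := by
    have h1 : ((∫ θ in (0:ℝ)..(2*Real.pi), P θ : ℝ) : ℂ)
        = ∫ θ in (0:ℝ)..(2*Real.pi), ((P θ : ℝ):ℂ) := by
      rw [intervalIntegral.integral_ofReal]
    have h2 : (∫ θ in (0:ℝ)..(2*Real.pi), ((P θ : ℝ):ℂ))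
        = ∑ m ∈ Finset.Icc (-B) B, rp ν u N m * ∫ θ in (0:ℝ)..(2*Real.pi), Complex.exp (m * θ * I) := by
      rw [intervalIntegral.integral_congr (fun θ _ => hPC θ)]
      rw [intervalIntegral.integral_finset_sum]
      · apply Finset.sum_congr rfl
        intro m _
        rw [intervalIntegral.integral_const_mul]
      · intro m _
        apply Continuous.intervalIntegrable
        apply Continuous.mul continuous_const
        apply Complex.continuous_exp.comp
        fun_prop
    have h3 : (∑ m ∈ Finset.Icc (-B) B, rp ν u N m * ∫ θ in (0:ℝ)..(2*Real.pi), Complex.exp (m * θ * I))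
        = ((2*Real.pi : ℝ) : ℂ) := by
      have hmem : (0:ℤ) ∈ Finset.Icc (-B) B := by
        have h := Bb_nonneg ν N
        exact Finset.mem_Icc.mpr ⟨by omega, by omega⟩
      rw [Finset.sum_eq_single_of_mem 0 hmem]
      · rw [ortho' 0, if_pos rfl, rp_zero ν u hq hν hgrow N, one_mul]
      · intro m _ hm
        rw [ortho' m, if_neg hm]
        exact mul_zero _
    have := h1.trans (h2.trans h3)
    exact_mod_cast this
  -- norm bound
  have hbound : ‖∫ θ in (0:ℝ)..(2*Real.pi), G θ * ((P θ : ℝ) : ℂ)‖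
      ≤ 2*Real.pi*M := by
    have h1 : ‖∫ θ in (0:ℝ)..(2*Real.pi), G θ * ((P θ : ℝ) : ℂ)‖
        ≤ ∫ θ in (0:ℝ)..(2*Real.pi), ‖G θ * ((P θ : ℝ) : ℂ)‖ :=
      intervalIntegral.norm_integral_le_integral_norm hpi
    have h2 : ∫ θ in (0:ℝ)..(2*Real.pi), ‖G θ * ((P θ : ℝ) : ℂ)‖
        ≤ ∫ θ in (0:ℝ)..(2*Real.pi), M * P θ := by
      apply intervalIntegral.integral_mono_on hpi
      · apply Continuous.intervalIntegrable
        apply Continuous.norm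
        exact hGcont.mul (Complex.continuous_ofReal.comp hPcont)
      · exact (continuous_const.mul hPcont).intervalIntegrable _ _
      · intro θ _
        rw [norm_mul]
        have : ‖((P θ : ℝ):ℂ)‖ = P θ := by
          rw [Complex.norm_real, Real.norm_eq_abs, _root_.abs_of_nonneg (hP0 θ)]
        rw [this]
        exact mul_le_mul_of_nonneg_right (hM θ) (hP0 θ)
    have h3 : ∫ θ in (0:ℝ)..(2*Real.pi), M * P θ = 2*Real.pi*M := by
      rw [intervalIntegral.integral_const_mul, hPmass]
      ring
    calc ‖∫ θ in (0:ℝ)..(2*Real.pi), G θ * ((P θ : ℝ) : ℂ)‖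
        = ‖∫ θ in (0:ℝ)..(2*Real.pi), G θ * ((P θ : ℝ) : ℂ)‖ := rfl
      _ ≤ ∫ θ in (0:ℝ)..(2*Real.pi), ‖G θ * ((P θ : ℝ) : ℂ)‖ := h1
      _ ≤ ∫ θ in (0:ℝ)..(2*Real.pi), M * P θ := h2
      _ = 2*Real.pi*M := h3
  -- evaluate the sum over the spectrum
  set S : ℝ := ∑ j ∈ Finset.range N, ‖c (ν j)‖ * ρ^(ν j) with hSdef
  have heval : (∑ m ∈ Finset.Icc (-B) B, rp ν u N m *
          ∫ θ in (0:ℝ)..(2*Real.pi), G θ * Complex.exp (m * θ * I))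
      = ((2*Real.pi : ℝ):ℂ) * c 0 + ((Real.pi : ℝ):ℂ) * ((S:ℝ):ℂ) := by
    set T : Finset ℤ := insert (0:ℤ) ((Finset.range N).image (fun j => -(ν j : ℤ))) with hTdef
    have hTsub : T ⊆ Finset.Icc (-B) B := by
      intro m hm
      rw [hTdef] at hm
      rcases Finset.mem_insert.mp hm with h | h
      · subst h
        have hB0 := Bb_nonneg ν N
        exact Finset.mem_Icc.mpr ⟨by omega, by omega⟩
      · obtain ⟨j, hj, rfl⟩ := Finset.mem_image.mp h
        have h1 : (ν j : ℤ) ≤ B := by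
          rw [hBdef]
          exact Finset.single_le_sum (f := fun i => (ν i : ℤ)) (fun i _ => by positivity) hj
        have h2 : (0:ℤ) ≤ ν j := by positivity
        exact Finset.mem_Icc.mpr ⟨by omega, by omega⟩
    rw [← Finset.sum_subset hTsub]
    · -- sum over T
      have h0T : (0:ℤ) ∉ (Finset.range N).image (fun j => -(ν j : ℤ)) := by
        intro h
        obtain ⟨j, hj, hj2⟩ := Finset.mem_image.mp h
        have := hν j
        omega
      rw [hTdef, Finset.sum_insert h0T]
      have hE0 : (∫ θ in (0:ℝ)..(2*Real.pi), G θ * Complex.exp ((0:ℤ) * θ * I))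
          = ((2*Real.pi:ℝ):ℂ) * c 0 := by
        rw [hE 0]
        norm_num
      rw [hE0, rp_zero ν u hq hν hgrow N, one_mul]
      congr 1
      rw [Finset.sum_image (by
        intro j hj j' hj' hee
        have : (ν j : ℤ) = ν j' := by simpa using hee
        by_contra hne
        rcases Nat.lt_or_ge j j' with h | h
        · have := nu_strict ν hq hν hgrow h; omega
        · have h' : j' < j := by omega
          have := nu_strict ν hq hν hgrow h'; omega)]
      rw [hSdef, Complex.ofReal_sum, Finset.mul_sum]
      apply Finset.sum_congr rfl
      intro j hj
      have hjN : j < N := Finset.mem_range.mp hj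
      rw [rp_diag ν u hq hν hgrow N j hjN]
      rw [hE (-(ν j : ℤ))]
      simp only [neg_neg, Int.toNat_natCast]
      rw [if_pos (Int.natCast_nonneg _)]
      have hcuj := hcu j
      push_cast
      calc (starRingEnd ℂ) (u j) / 2 * (2 * (Real.pi:ℂ) * c (ν j) * (ρ:ℂ) ^ ν j)
          = (Real.pi:ℂ) * (((starRingEnd ℂ) (u j) * c (ν j)) * (ρ:ℂ) ^ ν j) := by ring
        _ = (Real.pi:ℂ) * ((‖c (ν j)‖ : ℂ) * (ρ:ℂ) ^ ν j) := by rw [hcuj]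
    · -- terms outside T vanish
      intro m hmI hmT
      by_cases hm : 0 < m
      · rw [hE m, if_neg (by omega), mul_zero]
      · push_neg at hm
        set v : ℕ := (-m).toNat with hv
        have hmv : m = -(v:ℤ) := by omega
        have hv1 : 1 ≤ v := by
          rcases Nat.eq_zero_or_pos v with h | h
          · exfalso
            apply hmT
            rw [hTdef]
            have hm0 : m = 0 := by omega
            rw [hm0]
            exact Finset.mem_insert_self _ _
          · exact h
        have hvne : ∀ j < N, v ≠ ν j := by
          intro j hjN hveq
          apply hmT
          rw [hTdef]
          apply Finset.mem_insert_of_mem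
          apply Finset.mem_image.mpr
          exact ⟨j, Finset.mem_range.mpr hjN, by omega⟩
        by_cases hcv : c v = 0
        · rw [hE m, if_pos (by omega)]
          have : (-m).toNat = v := rfl
          rw [this, hcv]
          simp
        · have hsep : ∀ j < N, lam * v ≤ ν j ∨ lam * ν j ≤ v := by
            intro j hjN
            rcases hoff v hv1 hcv j hjN with h | h | h
            · exact absurd h (hvne j hjN)
            · left; exact h
            · right; exact h
          rw [hmv, rp_offdiag ν u hq hν hgrow hlam hql N v hv1 hsep, zero_mul]
  -- put it together
  have hfinal : ((2*Real.pi : ℝ):ℂ) * c 0 + ((Real.pi : ℝ):ℂ) * ((S:ℝ):ℂ)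
      = ∫ θ in (0:ℝ)..(2*Real.pi), G θ * ((P θ : ℝ) : ℂ) := by
    rw [hexp, heval]
  have hS0 : 0 ≤ S := by
    rw [hSdef]
    apply Finset.sum_nonneg
    intro j _
    positivity
  have habs : Real.pi * S = ‖((Real.pi : ℝ):ℂ) * ((S:ℝ):ℂ)‖ := by
    rw [norm_mul, Complex.norm_real, Complex.norm_real, Real.norm_eq_abs, Real.norm_eq_abs,
      _root_.abs_of_nonneg Real.pi_pos.le, _root_.abs_of_nonneg hS0]
  have hineq : Real.pi * S ≤ 2*Real.pi*M + 2*Real.pi*‖c 0‖ := by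
    rw [habs]
    have : ((Real.pi : ℝ):ℂ) * ((S:ℝ):ℂ)
        = (∫ θ in (0:ℝ)..(2*Real.pi), G θ * ((P θ : ℝ) : ℂ)) - ((2*Real.pi : ℝ):ℂ) * c 0 := by
      rw [← hfinal]; ring
    rw [this]
    calc ‖(∫ θ in (0:ℝ)..(2*Real.pi), G θ * ((P θ : ℝ) : ℂ)) - ((2*Real.pi : ℝ):ℂ) * c 0‖
        ≤ ‖∫ θ in (0:ℝ)..(2*Real.pi), G θ * ((P θ : ℝ) : ℂ)‖
          + ‖((2*Real.pi : ℝ):ℂ) * c 0‖ := by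
          apply norm_sub_le
      _ ≤ 2*Real.pi*M + 2*Real.pi*‖c 0‖ := by
          apply add_le_add hbound
          rw [norm_mul, Complex.norm_real, Real.norm_eq_abs, _root_.abs_of_nonneg hpi]
  have hpipos := Real.pi_pos
  rw [hSdef] at hineq ⊢
  nlinarith [hineq]

end Gap

end Stmt5Aux

set_option maxHeartbeats 2000000 in
theorem stmt5 (g : ℂ → ℂ) (hg : DifferentiableOn ℂ g (ball (0:ℂ) 1))
    (a₀ : ℂ) (a : ℕ → ℂ) (n : ℕ → ℕ) (lam : ℝ) (hlam : 1 < lam)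
    (hgap : ∀ k : ℕ, lam * (n k : ℝ) ≤ (n (k + 1) : ℝ)) (hn : ∀ k, 1 ≤ n k)
    (hrep : ∀ z ∈ ball (0:ℂ) 1, HasSum (fun k => a k * z ^ n k) (g z - a₀)) :
    (∃ M : ℝ, ∀ z ∈ ball (0:ℂ) 1, ‖g z‖ ≤ M) ↔
      Summable (fun k => ‖a k‖) := by
  classical
  constructor
  · rintro ⟨M, hM⟩
    have hlam0 : (0:ℝ) < lam := lt_trans one_pos hlam
    have hmono : StrictMono n := by
      apply strictMono_nat_of_lt_succ
      intro k
      have h1 := hgap k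
      have h2 : (1:ℝ) ≤ n k := by exact_mod_cast hn k
      have : (n k : ℝ) < n (k+1) := by nlinarith
      exact_mod_cast this
    have hnmono : ∀ {i k : ℕ}, i ≤ k → (n i : ℝ) ≤ n k := by
      intro i k h
      exact_mod_cast Nat.cast_le.mpr (hmono.monotone h)
    -- the full coefficient sequence
    set c : ℕ → ℂ := fun t => if h : ∃ k, n k = t then a h.choose else if t = 0 then a₀ else 0
      with hcdef
    have hcn : ∀ k, c (n k) = a k := by
      intro k
      have h : ∃ k', n k' = n k := ⟨k, rfl⟩
      rw [hcdef]
      simp only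
      rw [dif_pos h]
      congr 1
      exact hmono.injective h.choose_spec
    have hc0 : c 0 = a₀ := by
      rw [hcdef]
      simp only
      rw [dif_neg]
      · simp
      · rintro ⟨k, hk⟩
        have := hn k
        omega
    have hcz : ∀ t, t ≠ 0 → (∀ k, n k ≠ t) → c t = 0 := by
      intro t ht hnk
      rw [hcdef]
      simp only
      rw [dif_neg, if_neg ht]
      rintro ⟨k, hk⟩
      exact hnk k hk
    -- power series representation with full coefficients
    have hhs : ∀ z ∈ ball (0:ℂ) 1, HasSum (fun t => c t * z ^ t) (g z) := by
      intro z hz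
      have h1 := hrep z hz
      set f' : ℕ → ℂ := fun t => if t = 0 then 0 else c t * z ^ t with hf'
      have h2 : HasSum f' (g z - a₀) := by
        apply (Function.Injective.hasSum_iff hmono.injective ?_).mp ?_
        · intro t ht
          rw [hf']
          simp only
          by_cases h : t = 0
          · rw [if_pos h]
          · rw [if_neg h, hcz t h, zero_mul]
            intro k hk
            exact ht ⟨k, hk⟩
        · have : (f' ∘ n) = fun k => a k * z ^ n k := by
            funext k
            rw [hf']
            simp only [Function.comp_apply]
            rw [if_neg (by have := hn k; omega), hcn]
          rw [this]
          exact h1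
      have h3 := h2.update 0 a₀
      have h4 : Function.update f' 0 a₀ = fun t => c t * z ^ t := by
        funext t
        by_cases h : t = 0
        · subst h
          rw [Function.update_self, hc0]
          simp
        · rw [Function.update_of_ne h, hf']
          simp only
          rw [if_neg h]
      rw [h4] at h3
      have h5 : f' 0 = 0 := by rw [hf']; simp
      rw [h5] at h3
      convert h3 using 1
      · rfl
      · ring
    -- absolute summability strictly inside
    have habs : ∀ ρ : ℝ, 0 ≤ ρ → ρ < 1 → Summable (fun t => ‖c t‖ * ρ^t) := by
      intro ρ h0 h1
      set r₁ : ℝ := (1+ρ)/2 with hr₁def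
      have hρr : ρ < r₁ := by rw [hr₁def]; linarith
      have hr₁1 : r₁ < 1 := by rw [hr₁def]; linarith
      have hr₁0 : 0 < r₁ := by rw [hr₁def]; linarith
      have hz : ((r₁:ℂ)) ∈ ball (0:ℂ) 1 := by
        rw [mem_ball_zero_iff, Complex.norm_real, Real.norm_eq_abs, _root_.abs_of_nonneg hr₁0.le]
        exact hr₁1
      have h2 := (hhs _ hz).summable
      have h3 := h2.tendsto_atTop_zero
      have h4 : Filter.Tendsto (fun t => ‖c t‖ * r₁^t) Filter.atTop (nhds 0) := by
        have h5 := h3.norm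
        rw [norm_zero] at h5
        convert h5 using 2 with t
        rw [norm_mul, norm_pow, Complex.norm_real, Real.norm_eq_abs,
          _root_.abs_of_nonneg hr₁0.le]
      have h5 := h4.bddAbove_range
      obtain ⟨C, hC⟩ := h5
      have hC' : ∀ t, ‖c t‖ * r₁^t ≤ C := fun t => hC (Set.mem_range_self t)
      have hsg : Summable (fun t : ℕ => C * (ρ/r₁)^t) := by
        apply Summable.mul_left
        apply summable_geometric_of_lt_one (by positivity)
        rw [div_lt_one hr₁0]
        exact hρr
      apply Summable.of_nonneg_of_le
        (fun t => mul_nonneg (norm_nonneg _) (pow_nonneg h0 t)) (fun t => ?_) hsg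
      have he : ‖c t‖ * ρ^t = (‖c t‖ * r₁^t) * (ρ/r₁)^t := by
        rw [mul_assoc, ← mul_pow, mul_comm r₁ (ρ/r₁), div_mul_cancel₀ _ (ne_of_gt hr₁0)]
      rw [he]
      exact mul_le_mul_of_nonneg_right (hC' t) (by positivity)
    -- choose the power s
    obtain ⟨s, hs1, hq3, hql⟩ : ∃ s : ℕ, 1 ≤ s ∧ 3 ≤ lam^s ∧ lam < (lam^s - 1)*(lam-1) := by
      have h := tendsto_pow_atTop_atTop_of_one_lt hlam
      obtain ⟨s₀, hs₀⟩ := (h.eventually_ge_atTop (3 + 2*lam/(lam-1))).exists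
      refine ⟨max s₀ 1, le_max_right _ _, ?_, ?_⟩
      · have h1 : lam^s₀ ≤ lam^(max s₀ 1) := pow_le_pow_right₀ hlam.le (le_max_left _ _)
        have h2 : 0 < 2*lam/(lam-1) := by
          apply div_pos (by linarith) (by linarith)
        linarith
      · have h1 : lam^s₀ ≤ lam^(max s₀ 1) := pow_le_pow_right₀ hlam.le (le_max_left _ _)
        have h2 : (2*lam/(lam-1)) * (lam-1) = 2*lam :=
          div_mul_cancel₀ _ (show lam - 1 ≠ 0 by intro hh; linarith)
        nlinarith
    set q : ℝ := lam^s with hqdef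
    -- gap growth along arithmetic progressions
    have hpow : ∀ k t : ℕ, lam^t * (n k : ℝ) ≤ n (k + t) := by
      intro k t
      induction t with
      | zero => simp
      | succ t ih =>
        have h1 := hgap (k + t)
        calc lam^(t+1) * (n k : ℝ) = lam * (lam^t * n k) := by ring
          _ ≤ lam * n (k+t) := by
              apply mul_le_mul_of_nonneg_left ih hlam0.le
          _ ≤ n (k+t+1) := h1
    -- the class bound
    have hclassρ : ∀ r : ℕ, ∀ N : ℕ, ∀ ρ : ℝ, 0 < ρ → ρ < 1 →
        ∑ j ∈ Finset.range N, ‖a (s*j + r)‖ * ρ^(n (s*j + r))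
          ≤ 2*(M + ‖a₀‖) := by
      intro r N ρ hρ0 hρ1
      set ν : ℕ → ℕ := fun j => n (s*j + r) with hνdef
      set u : ℕ → ℂ := fun j => if a (s*j+r) = 0 then 1
        else a (s*j+r) / ((‖a (s*j+r)‖ : ℝ) : ℂ) with hudef
      have hν : ∀ j, 1 ≤ ν j := fun j => hn _
      have hgrow : ∀ j, q * (ν j : ℝ) ≤ ν (j+1) := by
        intro j
        have h1 := hpow (s*j + r) s
        have h2 : s*(j+1) + r = s*j + r + s := by ring
        rw [hνdef]
        simp only
        rw [h2]
        exact h1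
      have hu : ∀ j, ‖u j‖ = 1 := by
        intro j
        rw [hudef]
        simp only
        by_cases h : a (s*j+r) = 0
        · rw [if_pos h]; simp
        · rw [if_neg h, norm_div, Complex.norm_real, Real.norm_eq_abs,
            _root_.abs_of_nonneg (norm_nonneg _), div_self]
          intro hh
          exact h (norm_eq_zero.mp hh)
      have hcu : ∀ j, (starRingEnd ℂ) (u j) * c (ν j)
          = ((‖c (ν j)‖ : ℝ) : ℂ) := by
        intro j
        rw [hνdef]
        simp only
        rw [hcn]
        rw [hudef]
        simp only
        by_cases h : a (s*j+r) = 0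
        · rw [if_pos h, h]
          simp
        · rw [if_neg h, map_div₀, Complex.conj_ofReal]
          have hne : ((‖a (s*j+r)‖ : ℝ) : ℂ) ≠ 0 := by
            simp only [ne_eq, Complex.ofReal_eq_zero]
            intro hh
            exact h (norm_eq_zero.mp hh)
          have hmc : (starRingEnd ℂ) (a (s*j+r)) * a (s*j+r)
              = (((‖a (s*j+r)‖)^2 : ℝ) : ℂ) := by
            rw [mul_comm, Complex.mul_conj]
            congr 1
            exact Complex.normSq_eq_norm_sq _
          rw [div_mul_eq_mul_div, hmc, div_eq_iff hne]
          push_cast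
          ring
      -- the boundary function
      set G : ℝ → ℂ := fun θ => g ((ρ:ℂ) * Complex.exp ((θ:ℂ) * I)) with hGdef
      have hzmem : ∀ θ : ℝ, ((ρ:ℂ) * Complex.exp ((θ:ℂ) * I)) ∈ ball (0:ℂ) 1 := by
        intro θ
        rw [mem_ball_zero_iff, norm_mul, Complex.norm_real, Real.norm_eq_abs,
          _root_.abs_of_nonneg hρ0.le]
        have h1 : ‖Complex.exp ((θ:ℂ) * I)‖ = 1 := Complex.norm_exp_ofReal_mul_I θ
        rw [h1, mul_one]
        exact hρ1
      have hGcont : Continuous G := by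
        rw [hGdef]
        apply ContinuousOn.comp_continuous (DifferentiableOn.continuousOn hg) ?_ hzmem
        fun_prop
      have hG : ∀ θ : ℝ, HasSum (fun t : ℕ => c t * (ρ:ℂ)^t * Complex.exp (t * θ * I)) (G θ) := by
        intro θ
        have h := hhs _ (hzmem θ)
        have he : (fun t : ℕ => c t * ((ρ:ℂ)*Complex.exp ((θ:ℂ)*I))^t)
            = fun t : ℕ => c t * (ρ:ℂ)^t * Complex.exp ((t:ℂ) * θ * I) := by
          funext t
          rw [mul_pow, ← Complex.exp_nat_mul, ← mul_assoc]
          congr 2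
          ring
        rw [he] at h
        exact h
      have hMG : ∀ θ, ‖G θ‖ ≤ M := fun θ => hM _ (hzmem θ)
      have hoff : ∀ v : ℕ, 1 ≤ v → c v ≠ 0 →
          ∀ j < N, v = ν j ∨ lam * v ≤ ν j ∨ lam * (ν j : ℝ) ≤ v := by
        intro v hv1 hcv j hjN
        by_cases hex : ∃ i, n i = v
        · obtain ⟨i, rfl⟩ := hex
          rcases lt_trichotomy i (s*j + r) with h | h | h
          · right; left
            calc lam * (n i : ℝ) ≤ n (i+1) := hgap i
              _ ≤ n (s*j + r) := hnmono h
          · left; rw [h]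
          · right; right
            calc lam * ((ν j : ℕ) : ℝ) = lam * n (s*j+r) := rfl
              _ ≤ n (s*j+r+1) := hgap _
              _ ≤ n i := hnmono h
        · exfalso
          refine hcv (hcz v (by omega) (fun k hk => hex ⟨k, hk⟩))
      have hsum' : Summable (fun t => ‖c t‖ * ρ^t) := habs ρ hρ0.le hρ1
      have hfin := classBound ν u hq3 hν hgrow c hρ0.le hlam hql hsum' G hGcont hG hMG hu hcu N hoff
      rw [hc0] at hfin
      calc ∑ j ∈ Finset.range N, ‖a (s*j + r)‖ * ρ^(n (s*j + r))
          = ∑ j ∈ Finset.range N, ‖c (ν j)‖ * ρ^(ν j) := by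
            apply Finset.sum_congr rfl
            intro j _
            rw [hνdef]
            simp only
            rw [hcn]
        _ ≤ 2*(M + ‖a₀‖) := hfin
    -- let ρ → 1
    have hclass : ∀ r N : ℕ, ∑ j ∈ Finset.range N, ‖a (s*j + r)‖
        ≤ 2*(M + ‖a₀‖) := by
      intro r N
      have hne : (nhdsWithin (1:ℝ) (Set.Ioo (0:ℝ) 1)).NeBot := by
        apply mem_closure_iff_nhdsWithin_neBot.mp
        rw [closure_Ioo (by norm_num : (0:ℝ) ≠ 1)]
        constructor <;> norm_num
      have hten : Filter.Tendsto
          (fun ρ : ℝ => ∑ j ∈ Finset.range N, ‖a (s*j + r)‖ * ρ^(n (s*j + r)))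
          (nhdsWithin (1:ℝ) (Set.Ioo (0:ℝ) 1))
          (nhds (∑ j ∈ Finset.range N, ‖a (s*j + r)‖)) := by
        have hcont : Continuous
            (fun ρ : ℝ => ∑ j ∈ Finset.range N, ‖a (s*j + r)‖ * ρ^(n (s*j + r))) := by
          apply continuous_finset_sum
          intro j _
          fun_prop
        have h := (hcont.tendsto 1).mono_left (nhdsWithin_le_nhds (s := Set.Ioo (0:ℝ) 1))
        simpa using h
      apply le_of_tendsto hten
      filter_upwards [self_mem_nhdsWithin] with ρ hρ
      exact hclassρ r N ρ hρ.1 hρ.2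
    -- assemble summability
    have hs0 : 0 < s := hs1
    apply summable_of_sum_range_le (c := s * (2*(M + ‖a₀‖)))
      (fun k => norm_nonneg _)
    intro K
    set e : ℕ → ℕ × ℕ := fun k => (k % s, k / s) with hedef
    have hinj : ∀ x ∈ Finset.range K, ∀ y ∈ Finset.range K, e x = e y → x = y := by
      intro x _ y _ hxy
      rw [hedef] at hxy
      simp only [Prod.mk.injEq] at hxy
      have hx := Nat.div_add_mod x s
      have hy := Nat.div_add_mod y s
      rw [hxy.1, hxy.2] at hx
      omega
    have hsum_eq : ∑ k ∈ Finset.range K, ‖a k‖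
        = ∑ p ∈ (Finset.range K).image e, ‖a (s * p.2 + p.1)‖ := by
      rw [Finset.sum_image hinj]
      apply Finset.sum_congr rfl
      intro k _
      rw [hedef]
      simp only
      exact congrArg (fun t => ‖a t‖) (Nat.div_add_mod k s).symm
    rw [hsum_eq]
    have hsub : (Finset.range K).image e ⊆ Finset.range s ×ˢ Finset.range K := by
      intro p hp
      obtain ⟨k, hk, rfl⟩ := Finset.mem_image.mp hp
      rw [Finset.mem_product]
      constructor
      · exact Finset.mem_range.mpr (Nat.mod_lt k hs0)
      · exact Finset.mem_range.mpr
          (lt_of_le_of_lt (Nat.div_le_self k s) (Finset.mem_range.mp hk))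
    calc ∑ p ∈ (Finset.range K).image e, ‖a (s * p.2 + p.1)‖
        ≤ ∑ p ∈ Finset.range s ×ˢ Finset.range K, ‖a (s * p.2 + p.1)‖ :=
          Finset.sum_le_sum_of_subset_of_nonneg hsub (fun p _ _ => norm_nonneg _)
      _ = ∑ r ∈ Finset.range s, ∑ j ∈ Finset.range K, ‖a (s * j + r)‖ := by
          rw [Finset.sum_product]
      _ ≤ ∑ r ∈ Finset.range s, 2*(M + ‖a₀‖) :=
          Finset.sum_le_sum (fun r _ => hclass r K)
      _ = s * (2*(M + ‖a₀‖)) := by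
          rw [Finset.sum_const, Finset.card_range, nsmul_eq_mul]
  · intro hsum
    refine ⟨‖a₀‖ + ∑' k, ‖a k‖, ?_⟩
    intro z hz
    have h := hrep z hz
    have hz1 : ‖z‖ < 1 := mem_ball_zero_iff.mp hz
    have hle : ∀ k, ‖a k * z ^ n k‖ ≤ ‖a k‖ := by
      intro k
      rw [norm_mul, norm_pow]
      have h1 : ‖z‖ ^ n k ≤ 1 := pow_le_one₀ (norm_nonneg z) hz1.le
      calc ‖a k‖ * ‖z‖^(n k) ≤ ‖a k‖ * 1 :=
            mul_le_mul_of_nonneg_left h1 (norm_nonneg _)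
        _ = ‖a k‖ := by rw [mul_one]
    have hsn : Summable (fun k => ‖a k * z^(n k)‖) :=
      Summable.of_nonneg_of_le (fun _ => norm_nonneg _) hle hsum
    have h2 : ‖g z - a₀‖ ≤ ∑' k, ‖a k‖ := by
      rw [← h.tsum_eq]
      exact (norm_tsum_le_tsum_norm hsn).trans (Summable.tsum_le_tsum hle hsn hsum)
    calc ‖g z‖ = ‖a₀ + (g z - a₀)‖ := by
          congr 1
          ring
      _ ≤ ‖a₀‖ + ‖g z - a₀‖ := norm_add_le _ _
      _ ≤ ‖a₀‖ + ∑' k, ‖a k‖ := add_le_add (le_refl _) h2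
end

section
/- Let g be a nonconstant analytic function on D. Then sup_{z∈D} sup_{w∈D} | Σ_{k=0}^∞ ( Σ_{n=0}^∞ (n+1)ĝ(n+1) z^{n+k+1}/(n+k+1) ) w̄^k | = ∞. Equivalently, the family of functions G_{g,z}(w) = conjugate of ∫₀^z g'(ζ)/(1−w̄ζ)dζ is not uniformly bounded in H^∞ over z ∈ D. -/
open Metric

private lemma auxA {c : ℕ → ℂ} {ρ x : ℝ} (hρ : 0 ≤ ρ) (hx : ρ < x) (hx1 : 0 < x)
    (hS : Summable fun n => c n * (x : ℂ) ^ n) :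
    Summable (fun n : ℕ => ((n : ℝ) + 1) * ‖c (n + 1)‖ * ρ ^ n) := by
  have h0 : Filter.Tendsto (fun n => ‖c n * (x : ℂ) ^ n‖) Filter.atTop (nhds 0) := by
    simpa using hS.tendsto_atTop_zero.norm
  obtain ⟨C, hC⟩ := h0.bddAbove_range
  have hCn : ∀ n : ℕ, ‖c n‖ * x ^ n ≤ C := by
    intro n
    have := hC ⟨n, rfl⟩
    simpa [norm_mul, abs_of_pos hx1] using this
  have hq0 : 0 ≤ ρ / x := by positivity
  have hq1 : ρ / x < 1 := (div_lt_one hx1).2 hx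
  have hgeo : Summable (fun n : ℕ => ((n : ℝ) + 1) * (ρ / x) ^ n) := by
    have h1 : Summable (fun n : ℕ => (n : ℝ) ^ 1 * (ρ / x) ^ n) :=
      summable_pow_mul_geometric_of_norm_lt_one 1
        (by rwa [Real.norm_eq_abs, abs_of_nonneg hq0])
    have h2 : Summable (fun n : ℕ => (ρ / x) ^ n) := summable_geometric_of_lt_one hq0 hq1
    exact (h1.add h2).congr fun n => by ring
  refine Summable.of_nonneg_of_le (fun n => by positivity) ?_ (hgeo.mul_left (C / x))
  intro n
  have h1 : ‖c (n + 1)‖ ≤ C / x ^ (n + 1) := by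
    rw [le_div_iff₀ (pow_pos hx1 _)]
    exact hCn (n + 1)
  calc ((n : ℝ) + 1) * ‖c (n + 1)‖ * ρ ^ n
      ≤ ((n : ℝ) + 1) * (C / x ^ (n + 1)) * ρ ^ n := by
        gcongr
    _ = C / x * (((n : ℝ) + 1) * (ρ / x) ^ n) := by
        rw [div_pow]
        field_simp
        ring

theorem stmt10 (g : ℂ → ℂ) (c : ℕ → ℂ) (hg : DifferentiableOn ℂ g (ball (0:ℂ) 1))
    (hc : ∀ z ∈ ball (0:ℂ) 1, HasSum (fun n => c n * z ^ n) (g z))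
    (hnonconst : ∃ N : ℕ, c (N + 1) ≠ 0) :
    ∀ M : ℝ, ∃ z ∈ ball (0:ℂ) 1, ∃ w ∈ ball (0:ℂ) 1,
      M < ‖(∑' k : ℕ,
        (∑' n : ℕ, (((n : ℂ) + 1) * c (n + 1) / ((n : ℂ) + (k : ℂ) + 1)) * z ^ (n + k + 1)) *
          ((starRingEnd ℂ) w) ^ k)‖ := by
  by_contra hcon
  push_neg at hcon
  obtain ⟨M, hM⟩ := hcon
  obtain ⟨N, hN⟩ := hnonconst
  have hπ : (0:ℝ) < 2 * Real.pi := by positivity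
  -- coefficient summability
  have hsum0 : ∀ ρ : ℝ, 0 ≤ ρ → ρ < 1 →
      Summable (fun n : ℕ => ((n : ℝ) + 1) * ‖c (n + 1)‖ * ρ ^ n) := by
    intro ρ hρ0 hρ1
    have hx1 : (0:ℝ) < (ρ + 1) / 2 := by linarith
    have hxlt : (ρ + 1) / 2 < 1 := by linarith
    have hxb : (((ρ + 1) / 2 : ℝ) : ℂ) ∈ ball (0:ℂ) 1 := by
      simp only [mem_ball, dist_zero_right, Complex.norm_real, Real.norm_eq_abs]
      rw [abs_of_pos hx1]; exact hxlt
    exact auxA hρ0 (by linarith) hx1 (hc _ hxb).summable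
  -- the key integral estimate
  have key : ∀ r : ℝ, 0 < r → r < 1 →
      ((N : ℝ) + 1) * ‖c (N + 1)‖ * r ^ (N + 1) *
        (∑' k : ℕ, (r ^ 2) ^ k / ((N : ℝ) + (k : ℝ) + 1)) ≤ M := by
    intro r hr0 hr1
    have hr2 : (0:ℝ) ≤ r ^ 2 := by positivity
    have hr21 : r ^ 2 < 1 := by nlinarith
    set z : ℝ → ℂ := fun θ => (r : ℂ) * Complex.exp ((θ : ℂ) * Complex.I) with hzdef
    have habs : ∀ θ : ℝ, ‖z θ‖ = r := by
      intro θ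
      simp [hzdef, Complex.norm_exp_ofReal_mul_I, abs_of_pos hr0]
    have hzball : ∀ θ : ℝ, z θ ∈ ball (0:ℂ) 1 := by
      intro θ
      simp only [mem_ball, dist_zero_right, habs]
      exact hr1
    have hzz : ∀ θ : ℝ, z θ * (starRingEnd ℂ) (z θ) = ((r:ℂ)) ^ 2 := by
      intro θ
      rw [Complex.mul_conj, Complex.normSq_eq_norm_sq, habs]
      push_cast
      ring
    have hsummRk : ∀ n : ℕ, Summable (fun k : ℕ => (r ^ 2) ^ k / ((n : ℝ) + (k : ℝ) + 1)) := by
      intro n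
      apply Summable.of_nonneg_of_le (fun k => by positivity) (fun k => ?_)
        (summable_geometric_of_lt_one (r := r ^ 2) hr2 hr21)
      have h1 : (0:ℝ) ≤ (n : ℝ) := Nat.cast_nonneg n
      have h2 : (0:ℝ) ≤ (k : ℝ) := Nat.cast_nonneg k
      exact div_le_self (by positivity) (by linarith)
    set aR : ℕ → ℝ := fun n => ∑' k : ℕ, (r ^ 2) ^ k / ((n : ℝ) + (k : ℝ) + 1) with haRdef
    set a : ℕ → ℂ := fun n => ∑' k : ℕ, ((r:ℂ) ^ 2) ^ k / ((n : ℂ) + (k : ℂ) + 1) with hadef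
    have haeq : ∀ n, a n = ((aR n : ℝ) : ℂ) := by
      intro n
      rw [hadef, haRdef]
      dsimp only
      rw [Complex.ofReal_tsum]
      congr 1
      funext k
      push_cast
      ring
    have haR0 : ∀ n, 0 ≤ aR n := by
      intro n
      rw [haRdef]
      exact tsum_nonneg (fun k => by positivity)
    have hanorm : ∀ n, ‖a n‖ = aR n := by
      intro n
      rw [haeq n, Complex.norm_real, Real.norm_eq_abs, abs_of_nonneg (haR0 n)]
    have haRle : ∀ n, aR n ≤ (1 - r ^ 2)⁻¹ := by
      intro n
      rw [haRdef]
      dsimp only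
      calc (∑' k : ℕ, (r ^ 2) ^ k / ((n : ℝ) + (k : ℝ) + 1)) ≤ ∑' k : ℕ, (r ^ 2) ^ k := by
            apply Summable.tsum_le_tsum (fun k => ?_) (hsummRk n) (summable_geometric_of_lt_one hr2 hr21)
            have h1 : (0:ℝ) ≤ (n : ℝ) := Nat.cast_nonneg n
            have h2 : (0:ℝ) ≤ (k : ℝ) := Nat.cast_nonneg k
            exact div_le_self (by positivity) (by linarith)
        _ = (1 - r ^ 2)⁻¹ := tsum_geometric_of_lt_one hr2 hr21
    set Cn : ℕ → ℂ := fun n => ((n : ℂ) + 1) * c (n + 1) * a n with hCndef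
    have hnormnat : ∀ n : ℕ, ‖((n:ℂ) + 1)‖ = (n : ℝ) + 1 := by
      intro n
      rw [show ((n:ℂ) + 1) = ((n + 1 : ℕ) : ℂ) by push_cast; ring, Complex.norm_natCast]
      push_cast
      ring
    have hCnnorm : ∀ n, ‖Cn n‖ = ((n : ℝ) + 1) * ‖c (n + 1)‖ * aR n := by
      intro n
      rw [hCndef]
      dsimp only
      rw [norm_mul, norm_mul, hnormnat, hanorm]
    -- pointwise resummation identity
    have hpoint : ∀ θ : ℝ,
        (∑' k : ℕ, (∑' n : ℕ, (((n : ℂ) + 1) * c (n + 1) / ((n : ℂ) + (k : ℂ) + 1)) *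
            (z θ) ^ (n + k + 1)) * ((starRingEnd ℂ) (z θ)) ^ k)
          = ∑' n : ℕ, Cn n * (z θ) ^ (n + 1) := by
      intro θ
      have hf : Summable (fun n : ℕ => ((n : ℝ) + 1) * ‖c (n + 1)‖ * r ^ (n + 1)) :=
        ((hsum0 r hr0.le hr1).mul_right r).congr fun n => by ring
      have hgeo : Summable (fun k : ℕ => (r ^ 2) ^ k) := summable_geometric_of_lt_one hr2 hr21
      have hprod : Summable (fun p : ℕ × ℕ =>
          (((p.1 : ℝ) + 1) * ‖c (p.1 + 1)‖ * r ^ (p.1 + 1)) * (r ^ 2) ^ p.2) :=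
        hf.mul_of_nonneg hgeo (fun n => by positivity) (fun k => by positivity)
      have hbound : ∀ p : ℕ × ℕ,
          ‖((((p.1 : ℂ) + 1) * c (p.1 + 1) / ((p.1 : ℂ) + (p.2 : ℂ) + 1)) *
              (z θ) ^ (p.1 + p.2 + 1)) * ((starRingEnd ℂ) (z θ)) ^ p.2‖ ≤
            (((p.1 : ℝ) + 1) * ‖c (p.1 + 1)‖ * r ^ (p.1 + 1)) * (r ^ 2) ^ p.2 := by
        rintro ⟨n, k⟩
        have hdn : ‖((n : ℂ) + (k : ℂ) + 1)‖ = (n : ℝ) + (k : ℝ) + 1 := by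
          rw [show ((n:ℂ) + (k:ℂ) + 1) = ((n + k + 1 : ℕ) : ℂ) by push_cast; ring,
            Complex.norm_natCast]
          push_cast
          ring
        have hzn : ‖z θ‖ = r := by rw [habs]
        have hcn : ‖(starRingEnd ℂ) (z θ)‖ = r := by
          rw [show ((starRingEnd ℂ) (z θ)) = star (z θ) from rfl, norm_star, hzn]
        have hpow : r ^ (n + k + 1) * r ^ k = r ^ (n + 1) * (r ^ 2) ^ k := by
          rw [← pow_mul, ← pow_add, ← pow_add]
          congr 1
          ring
        rw [norm_mul, norm_mul, norm_div, norm_mul, hdn, hnormnat, norm_pow, norm_pow,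
          hzn, hcn]
        calc ((n:ℝ)+1) * ‖c (n+1)‖ / ((n:ℝ)+(k:ℝ)+1) * r ^ (n+k+1) * r ^ k
            = (((n:ℝ)+1) * ‖c (n+1)‖ / ((n:ℝ)+(k:ℝ)+1)) * (r ^ (n+1) * (r^2)^k) := by
              rw [mul_assoc, hpow]
          _ ≤ (((n:ℝ)+1) * ‖c (n+1)‖) * (r ^ (n+1) * (r^2)^k) := by
              gcongr
              apply div_le_self (by positivity)
              have h1 : (0:ℝ) ≤ (n : ℝ) := Nat.cast_nonneg n
              have h2 : (0:ℝ) ≤ (k : ℝ) := Nat.cast_nonneg k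
              linarith
          _ = (((n:ℝ)+1) * ‖c (n+1)‖ * r ^ (n+1)) * (r^2)^k := by ring
      have hsumm2 : Summable (fun p : ℕ × ℕ =>
          ((((p.1 : ℂ) + 1) * c (p.1 + 1) / ((p.1 : ℂ) + (p.2 : ℂ) + 1)) *
              (z θ) ^ (p.1 + p.2 + 1)) * ((starRingEnd ℂ) (z θ)) ^ p.2) :=
        Summable.of_norm_bounded hprod hbound
      calc (∑' k : ℕ, (∑' n : ℕ, (((n : ℂ) + 1) * c (n + 1) / ((n : ℂ) + (k : ℂ) + 1)) *
              (z θ) ^ (n + k + 1)) * ((starRingEnd ℂ) (z θ)) ^ k)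
          = ∑' k : ℕ, ∑' n : ℕ, ((((n : ℂ) + 1) * c (n + 1) / ((n : ℂ) + (k : ℂ) + 1)) *
              (z θ) ^ (n + k + 1)) * ((starRingEnd ℂ) (z θ)) ^ k :=
            tsum_congr fun k => (tsum_mul_right).symm
        _ = ∑' n : ℕ, ∑' k : ℕ, ((((n : ℂ) + 1) * c (n + 1) / ((n : ℂ) + (k : ℂ) + 1)) *
              (z θ) ^ (n + k + 1)) * ((starRingEnd ℂ) (z θ)) ^ k := Summable.tsum_comm hsumm2
        _ = ∑' n : ℕ, Cn n * (z θ) ^ (n + 1) := by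
            apply tsum_congr
            intro n
            have hzk : ∀ k : ℕ, (z θ) ^ (n + k + 1) * ((starRingEnd ℂ) (z θ)) ^ k
                = (z θ) ^ (n + 1) * ((r:ℂ) ^ 2) ^ k := by
              intro k
              rw [show n + k + 1 = (n + 1) + k by ring, pow_add, mul_assoc, ← mul_pow, hzz θ]
            have h1 : ∀ k : ℕ, ((((n : ℂ) + 1) * c (n + 1) / ((n : ℂ) + (k : ℂ) + 1)) *
                (z θ) ^ (n + k + 1)) * ((starRingEnd ℂ) (z θ)) ^ k
                = (((n : ℂ) + 1) * c (n + 1) * (z θ) ^ (n + 1)) *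
                  (((r:ℂ) ^ 2) ^ k / ((n : ℂ) + (k : ℂ) + 1)) := by
              intro k
              rw [mul_assoc, hzk k]
              ring
            rw [tsum_congr h1, tsum_mul_left, hCndef]
            dsimp only
            rw [hadef]
            dsimp only
            ring
    -- the integrand family
    set eN : ℝ → ℂ := fun θ => Complex.exp ((-(((N:ℝ) + 1) * θ) : ℝ) * Complex.I) with heNdef
    set Gf : ℕ → ℝ → ℂ := fun n θ => (Cn n * (z θ) ^ (n + 1)) * eN θ with hGfdef
    have heN1 : ∀ θ, ‖eN θ‖ = 1 := fun θ => Complex.norm_exp_ofReal_mul_I _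
    have hGf_closed : ∀ (n : ℕ) (θ : ℝ), Gf n θ =
        (Cn n * (r:ℂ) ^ (n + 1)) * Complex.exp ((((n:ℂ) - (N:ℂ)) * Complex.I) * (θ:ℂ)) := by
      intro n θ
      have hexp : Complex.exp ((((n:ℂ) - (N:ℂ)) * Complex.I) * (θ:ℂ))
          = Complex.exp ((θ:ℂ) * Complex.I) ^ (n + 1) * eN θ := by
        rw [heNdef]
        dsimp only
        rw [← Complex.exp_nat_mul, ← Complex.exp_add]
        congr 1
        push_cast
        ring
      rw [hGfdef]
      dsimp only
      rw [hexp, hzdef]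
      dsimp only
      rw [mul_pow]
      ring
    have hcont : ∀ n, Continuous (Gf n) := by
      intro n
      rw [hGfdef]
      dsimp only
      rw [hzdef, heNdef]
      fun_prop
    have h2πle : (0:ℝ) ≤ 2 * Real.pi := hπ.le
    have hInt : ∀ n, MeasureTheory.Integrable (Gf n)
        (MeasureTheory.volume.restrict (Set.Ioc (0:ℝ) (2 * Real.pi))) := by
      intro n
      have h := ((hcont n).intervalIntegrable (μ := MeasureTheory.volume) 0 (2 * Real.pi))
      rw [intervalIntegrable_iff_integrableOn_Ioc_of_le h2πle] at h
      exact h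
    have hGfnorm : ∀ n θ, ‖Gf n θ‖ = ‖Cn n‖ * r ^ (n + 1) := by
      intro n θ
      rw [hGfdef]
      dsimp only
      rw [norm_mul, norm_mul, norm_pow,
        show ‖z θ‖ = r from by rw [habs],
        show ‖eN θ‖ = 1 from by rw [heN1]]
      ring
    have hIntNorm : ∀ n, (∫ θ in Set.Ioc (0:ℝ) (2 * Real.pi), ‖Gf n θ‖) =
        (2 * Real.pi) * (‖Cn n‖ * r ^ (n + 1)) := by
      intro n
      rw [show (fun θ => ‖Gf n θ‖) = fun _ => ‖Cn n‖ * r ^ (n + 1) from funext (hGfnorm n)]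
      rw [MeasureTheory.setIntegral_const, Real.volume_real_Ioc_of_le h2πle, smul_eq_mul]
      ring
    have hSummInt : Summable (fun n => ∫ θ in Set.Ioc (0:ℝ) (2 * Real.pi), ‖Gf n θ‖) := by
      rw [show (fun n => ∫ θ in Set.Ioc (0:ℝ) (2 * Real.pi), ‖Gf n θ‖)
          = fun n => (2 * Real.pi) * (‖Cn n‖ * r ^ (n + 1)) from funext hIntNorm]
      apply Summable.of_nonneg_of_le (fun n => by positivity) (fun n => ?_)
        (((hsum0 r hr0.le hr1).mul_left ((2 * Real.pi) * (1 - r^2)⁻¹ * r)))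
      rw [hCnnorm]
      have hinv : (0:ℝ) ≤ (1 - r^2)⁻¹ := by
        rw [inv_nonneg]
        linarith
      calc 2 * Real.pi * (((n:ℝ)+1) * ‖c (n+1)‖ * aR n * r ^ (n+1))
          ≤ 2 * Real.pi * (((n:ℝ)+1) * ‖c (n+1)‖ * (1 - r^2)⁻¹ * r ^ (n+1)) := by
            gcongr
            exact haRle n
        _ = 2 * Real.pi * (1 - r^2)⁻¹ * r * (((n:ℝ)+1) * ‖c (n+1)‖ * r ^ n) := by ring
    have hHasSum := MeasureTheory.hasSum_integral_of_summable_integral_norm hInt hSummInt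
    have hIntN : (∫ θ in Set.Ioc (0:ℝ) (2 * Real.pi), Gf N θ) =
        (2 * Real.pi : ℝ) • (Cn N * (r:ℂ) ^ (N + 1)) := by
      rw [← intervalIntegral.integral_of_le h2πle]
      simp only [hGf_closed]
      simp only [sub_self, zero_mul, Complex.exp_zero, mul_one]
      rw [intervalIntegral.integral_const, sub_zero]
    have hInt0 : ∀ n, n ≠ N → (∫ θ in Set.Ioc (0:ℝ) (2 * Real.pi), Gf n θ) = 0 := by
      intro n hn
      rw [← intervalIntegral.integral_of_le h2πle]
      simp only [hGf_closed]
      rw [intervalIntegral.integral_const_mul]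
      have hc0' : (((n:ℂ) - (N:ℂ)) * Complex.I) ≠ 0 := by
        apply mul_ne_zero
        · rw [sub_ne_zero]
          exact_mod_cast hn
        · exact Complex.I_ne_zero
      rw [integral_exp_mul_complex hc0']
      have h1 : (((n:ℂ) - (N:ℂ)) * Complex.I) * ((2 * Real.pi : ℝ) : ℂ)
          = (((n:ℤ) - (N:ℤ) : ℤ) : ℂ) * (2 * (Real.pi:ℂ) * Complex.I) := by
        push_cast
        ring
      rw [h1, Complex.exp_int_mul_two_pi_mul_I]
      simp
    have htsum_int : (∑' n : ℕ, ∫ θ in Set.Ioc (0:ℝ) (2 * Real.pi), Gf n θ)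
        = (2 * Real.pi : ℝ) • (Cn N * (r:ℂ) ^ (N + 1)) := by
      rw [tsum_eq_single N (fun n hn => hInt0 n hn)]
      exact hIntN
    have hval : (∫ θ in Set.Ioc (0:ℝ) (2 * Real.pi), ∑' n : ℕ, Gf n θ)
        = (2 * Real.pi : ℝ) • (Cn N * (r:ℂ) ^ (N + 1)) := by
      rw [← hHasSum.tsum_eq]
      exact htsum_int
    have hFe : ∀ θ : ℝ, (∑' n : ℕ, Gf n θ) =
        (∑' k : ℕ, (∑' n : ℕ, (((n : ℂ) + 1) * c (n + 1) / ((n : ℂ) + (k : ℂ) + 1)) *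
          (z θ) ^ (n + k + 1)) * ((starRingEnd ℂ) (z θ)) ^ k) * eN θ := by
      intro θ
      calc (∑' n : ℕ, Gf n θ) = ∑' n : ℕ, (Cn n * (z θ) ^ (n + 1)) * eN θ := by
            simp only [hGfdef]
        _ = (∑' n : ℕ, Cn n * (z θ) ^ (n + 1)) * eN θ := tsum_mul_right
        _ = _ := by rw [hpoint θ]
    have hboundInt : ‖∫ θ in Set.Ioc (0:ℝ) (2 * Real.pi), ∑' n : ℕ, Gf n θ‖
        ≤ M * (2 * Real.pi) := by
      rw [← intervalIntegral.integral_of_le h2πle]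
      have h := intervalIntegral.norm_integral_le_of_norm_le_const (C := M)
        (f := fun θ => ∑' n : ℕ, Gf n θ) (a := 0) (b := 2 * Real.pi) ?_
      · rw [sub_zero, abs_of_pos hπ] at h
        exact h
      · intro x hx
        show ‖∑' n : ℕ, Gf n x‖ ≤ M
        rw [hFe x, norm_mul,
          show ‖eN x‖ = 1 from by rw [heN1], mul_one]
        exact hM (z x) (hzball x) (z x) (hzball x)
    have hfinal : (2 * Real.pi) * (‖Cn N‖ * r ^ (N + 1)) ≤ M * (2 * Real.pi) := by
      have h1 : ‖(2 * Real.pi : ℝ) • (Cn N * (r:ℂ) ^ (N + 1))‖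
          = (2 * Real.pi) * (‖Cn N‖ * r ^ (N+1)) := by
        rw [norm_smul, Real.norm_eq_abs, abs_of_pos hπ, norm_mul, norm_pow,
          show ‖(r:ℂ)‖ = r from by rw [Complex.norm_real, Real.norm_eq_abs, abs_of_pos hr0]]
      rw [← h1, ← hval]
      exact hboundInt
    have h2 : ‖Cn N‖ * r ^ (N + 1) ≤ M := by nlinarith [hfinal, hπ]
    calc ((N:ℝ)+1) * ‖c (N+1)‖ * r^(N+1) * (∑' k : ℕ, (r ^ 2) ^ k / ((N : ℝ) + (k : ℝ) + 1))
        = ‖Cn N‖ * r^(N+1) := by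
          rw [hCnnorm N, haRdef]
          ring
      _ ≤ M := h2
  -- blow-up of the lower bound: contradiction
  have hc0 : 0 < ‖c (N + 1)‖ := norm_pos_iff.mpr hN
  have hε : 0 < ((N : ℝ) + 1) * ‖c (N + 1)‖ := by positivity
  set ε : ℝ := ((N : ℝ) + 1) * ‖c (N + 1)‖ with hεdef
  obtain ⟨m, hm⟩ := (Real.tendsto_sum_range_one_div_nat_succ_atTop.eventually_ge_atTop
    (2 * (|M| + 1) / ε + (N : ℝ))).exists
  -- the shifted harmonic sum is large
  have hshift : ∀ m' : ℕ, ∑ i ∈ Finset.range (N + m'), (1 / ((i : ℝ) + 1)) =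
      (∑ i ∈ Finset.range N, (1 / ((i : ℝ) + 1))) +
        ∑ k ∈ Finset.range m', (1 / ((N : ℝ) + (k : ℝ) + 1)) := by
    intro m'
    induction m' with
    | zero => simp
    | succ m' ih =>
        rw [show N + (m' + 1) = (N + m') + 1 from rfl, Finset.sum_range_succ, ih,
          Finset.sum_range_succ]
        push_cast
        ring
  have hHN : ∑ i ∈ Finset.range N, (1 / ((i : ℝ) + 1)) ≤ (N : ℝ) := by
    calc ∑ i ∈ Finset.range N, (1 / ((i : ℝ) + 1)) ≤ ∑ i ∈ Finset.range N, (1 : ℝ) := by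
          apply Finset.sum_le_sum
          intro i _
          rw [div_le_one (by positivity)]
          simp
      _ = (N : ℝ) := by simp
  have hS : 2 * (|M| + 1) / ε ≤ ∑ k ∈ Finset.range m, (1 / ((N : ℝ) + (k : ℝ) + 1)) := by
    have h1 : ∑ i ∈ Finset.range m, (1 / ((i : ℝ) + 1)) ≤
        ∑ i ∈ Finset.range (N + m), (1 / ((i : ℝ) + 1)) := by
      apply Finset.sum_le_sum_of_subset_of_nonneg
      · exact Finset.range_subset_range.2 (by omega)
      · intro i _ _; positivity
    have := hshift m
    linarith
  set S : ℝ := ∑ k ∈ Finset.range m, (1 / ((N : ℝ) + (k : ℝ) + 1)) with hSdef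
  -- choose r
  set p : ℕ := N + 1 + 2 * m with hpdef
  have hp0 : (0:ℝ) < (p : ℝ) := by positivity
  set r : ℝ := (2 : ℝ) ^ (-(1 : ℝ) / (p : ℝ)) with hrdef
  have hr0 : 0 < r := Real.rpow_pos_of_pos (by norm_num) _
  have hr1 : r < 1 := by
    apply Real.rpow_lt_one_of_one_lt_of_neg (by norm_num)
    apply div_neg_of_neg_of_pos (by norm_num) hp0
  have hrp : r ^ p = 1 / 2 := by
    rw [hrdef, ← Real.rpow_natCast ((2:ℝ) ^ (-(1:ℝ) / (p : ℝ))) p, ← Real.rpow_mul (by norm_num)]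
    rw [div_mul_cancel₀ _ (ne_of_gt hp0)]
    rw [Real.rpow_neg_one]
    norm_num
  have hkey := key r hr0 hr1
  -- lower bound for the tail sum
  have hsummR : Summable (fun k : ℕ => (r ^ 2) ^ k / ((N : ℝ) + (k : ℝ) + 1)) := by
    apply Summable.of_nonneg_of_le (fun k => by positivity) (fun k => ?_)
      (summable_geometric_of_lt_one (r := r ^ 2) (by positivity) (by nlinarith))
    have h1 : (0:ℝ) ≤ (N : ℝ) := Nat.cast_nonneg N
    have h2 : (0:ℝ) ≤ (k : ℝ) := Nat.cast_nonneg k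
    exact div_le_self (by positivity) (by linarith)
  have hlow : ∑ k ∈ Finset.range m, (r ^ 2) ^ k / ((N : ℝ) + (k : ℝ) + 1) ≤
      ∑' k : ℕ, (r ^ 2) ^ k / ((N : ℝ) + (k : ℝ) + 1) :=
    Summable.sum_le_tsum _ (fun k _ => by positivity) hsummR
  have hterm : ∀ k ∈ Finset.range m,
      (1 / 2) * (1 / ((N : ℝ) + (k : ℝ) + 1)) ≤ r ^ (N + 1) * ((r ^ 2) ^ k / ((N : ℝ) + (k : ℝ) + 1)) := by
    intro k hk
    have hk' : k ≤ m := le_of_lt (Finset.mem_range.1 hk)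
    have h1 : (r ^ 2) ^ m ≤ (r ^ 2) ^ k :=
      pow_le_pow_of_le_one (by positivity) (by nlinarith) hk'
    have h2 : r ^ (N + 1) * (r ^ 2) ^ m = 1 / 2 := by
      rw [← pow_mul, ← pow_add, ← hpdef, hrp]
    have h3 : (1:ℝ) / 2 ≤ r ^ (N + 1) * (r ^ 2) ^ k := by
      rw [← h2]
      gcongr
    rw [mul_one_div, ← mul_div_assoc]
    gcongr
  have hsumlow : (1 / 2) * S ≤ r ^ (N + 1) * ∑' k : ℕ, (r ^ 2) ^ k / ((N : ℝ) + (k : ℝ) + 1) := by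
    calc (1 / 2) * S = ∑ k ∈ Finset.range m, (1 / 2) * (1 / ((N : ℝ) + (k : ℝ) + 1)) := by
          rw [hSdef, Finset.mul_sum]
      _ ≤ ∑ k ∈ Finset.range m, r ^ (N + 1) * ((r ^ 2) ^ k / ((N : ℝ) + (k : ℝ) + 1)) :=
          Finset.sum_le_sum hterm
      _ = r ^ (N + 1) * ∑ k ∈ Finset.range m, (r ^ 2) ^ k / ((N : ℝ) + (k : ℝ) + 1) := by
          rw [Finset.mul_sum]
      _ ≤ _ := by gcongr
  -- combine
  have hfin : ε * ((1 / 2) * S) ≤ M := by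
    calc ε * ((1 / 2) * S) ≤ ε * (r ^ (N + 1) * ∑' k : ℕ, (r ^ 2) ^ k / ((N : ℝ) + (k : ℝ) + 1)) := by
          gcongr
      _ = ((N : ℝ) + 1) * ‖c (N + 1)‖ * r ^ (N + 1) *
            (∑' k : ℕ, (r ^ 2) ^ k / ((N : ℝ) + (k : ℝ) + 1)) := by rw [hεdef]; ring
      _ ≤ M := hkey
  have hbig : |M| + 1 ≤ ε * ((1 / 2) * S) := by
    have h := mul_le_mul_of_nonneg_left hS hε.le
    have h2 : ε * (2 * (|M| + 1) / ε) = 2 * (|M| + 1) := by field_simp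
    have h3 : ε * ((1 / 2) * S) = (ε * S) / 2 := by ring
    rw [h2] at h
    linarith
  have : M < |M| + 1 := by
    have := le_abs_self M
    linarith
  linarith
end

section
/- Let X be a Banach space of analytic functions on the unit disc containing the disc algebra, closed under dilations f ↦ f_r with sup_{0<r<1}‖f_r‖_X ≤ C‖f‖_X, and with bounded point evaluations. Let g be analytic on D and let P̄ denote the closure of the polynomials in X. Then T_g : X → H^∞ is bounded if and only if T_g : P̄ → H^∞ is bounded, and the two operator norms are comparable (with constants depending only on C). -/
open Metric MeasureTheory

namespace Stmt17Aux
open Filter Topology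


lemma poly_approx {H : ℂ → ℂ} {R : ℝ} (hR : 1 < R)
    (hH : DifferentiableOn ℂ H (ball (0:ℂ) R)) :
    ∃ q : ℕ → Polynomial ℂ, TendstoUniformlyOn (fun n z => (q n).eval z) H atTop
      (closedBall (0:ℂ) 1) := by
  set s : ℝ := (1 + min R 2) / 2 with hs
  have h1s : 1 < s := by
    have : 1 < min R 2 := lt_min hR one_lt_two
    simp only [hs]; linarith
  have hsR : s < R := by
    have h2 : min R 2 ≤ R := min_le_left _ _
    have : 1 < min R 2 := lt_min hR one_lt_two
    simp only [hs]; linarith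
  set S : NNReal := ⟨s, by positivity⟩ with hS
  have hdiff : DifferentiableOn ℂ H (closedBall (0:ℂ) S) := by
    apply hH.mono
    intro w hw
    simp only [mem_closedBall, mem_ball] at *
    calc dist w 0 ≤ (S:ℝ) := hw
    _ < R := hsR
  have hball := hdiff.hasFPowerSeriesOnBall (by simp only [hS]; exact_mod_cast (by linarith : (0:ℝ) < s))
  set p := cauchyPowerSeries H 0 S with hp
  set s₂ : ℝ := (1 + s)/2 with hs₂
  have h1s₂ : 1 < s₂ := by simp only [hs₂]; linarith
  have hs₂s : s₂ < s := by simp only [hs₂]; linarith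
  set S₂ : NNReal := ⟨s₂, by positivity⟩ with hS₂
  have hUnif := hball.tendstoUniformlyOn (r' := S₂)
    (by exact_mod_cast hs₂s : (S₂ : ENNReal) < (S : ENNReal))
  refine ⟨fun n => ∑ k ∈ Finset.range n, Polynomial.C (p.coeff k) * Polynomial.X ^ k, ?_⟩
  have heq : ∀ n, (fun z => Polynomial.eval z (∑ k ∈ Finset.range n,
      Polynomial.C (p.coeff k) * Polynomial.X ^ k)) = fun z => p.partialSum n z := by
    intro n
    funext z
    rw [Polynomial.eval_finset_sum]
    unfold FormalMultilinearSeries.partialSum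
    refine Finset.sum_congr rfl fun k _ => ?_
    rw [FormalMultilinearSeries.apply_eq_pow_smul_coeff, smul_eq_mul]
    rw [Polynomial.eval_mul, Polynomial.eval_pow, Polynomial.eval_C, Polynomial.eval_X, mul_comm]
  have hmono : closedBall (0:ℂ) 1 ⊆ ball (0:ℂ) S₂ := by
    apply closedBall_subset_ball
    exact_mod_cast h1s₂
  have := hUnif.mono hmono
  simp only [zero_add] at this
  intro u hu
  rw [show (fun n z => Polynomial.eval z (∑ k ∈ Finset.range n,
      Polynomial.C (p.coeff k) * Polynomial.X ^ k)) = fun n z => p.partialSum n z by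
    funext n; exact heq n]
  exact this u hu

noncomputable section

abbrev K : Set ℂ := closedBall (0:ℂ) 1

instance : CompactSpace K := isCompact_iff_compactSpace.mp (isCompact_closedBall _ _)

open Classical in
/-- extension of a continuous map on the closed disc to `ℂ` by zero -/
def Fext (f : C(K, ℂ)) : ℂ → ℂ :=
  fun z => if h : z ∈ K then f ⟨z, h⟩ else 0

lemma Fext_apply (f : C(K, ℂ)) {z : ℂ} (h : z ∈ K) : Fext f z = f ⟨z, h⟩ := by unfold Fext; rw [dif_pos h]

lemma Fext_continuousOn (f : C(K, ℂ)) : ContinuousOn (Fext f) K := by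
  rw [continuousOn_iff_continuous_restrict]
  have : K.domRestrict (Fext f) = f := by
    funext w
    rw [Set.restrict_apply]
    rw [Fext_apply f w.2]
  rw [this]
  exact f.continuous

/-- the closure of the polynomials in `C(K, ℂ)` -/
def Apol : Submodule ℂ C(K, ℂ) :=
  (LinearMap.range (Polynomial.toContinuousMapOnAlgHom (R := ℂ) K).toLinearMap).topologicalClosure

lemma exists_poly_unif (f : C(K,ℂ)) (hf : f ∈ Apol) :
    ∃ q : ℕ → Polynomial ℂ,
      TendstoUniformlyOn (fun n z => (q n).eval z) (Fext f) atTop K := by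
  have hf' : f ∈ closure ((LinearMap.range
      (Polynomial.toContinuousMapOnAlgHom (R := ℂ) K).toLinearMap :
        Submodule ℂ C(K,ℂ)) : Set C(K,ℂ)) := by
    rw [← Submodule.topologicalClosure_coe]; exact hf
  obtain ⟨u, hu_mem, hu_t⟩ := mem_closure_iff_seq_limit.mp hf'
  simp only [SetLike.mem_coe, LinearMap.mem_range] at hu_mem
  choose q hq using hu_mem
  refine ⟨q, ?_⟩
  rw [Metric.tendstoUniformlyOn_iff]
  intro ε hε
  obtain ⟨N, hN⟩ := (Metric.tendsto_atTop.mp hu_t) (ε/2) (by positivity)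
  refine eventually_atTop.mpr ⟨N, fun n hn w hw => ?_⟩
  have h1 : dist (u n) f < ε/2 := hN n hn
  have h2 : dist (f ⟨w,hw⟩) ((u n) ⟨w,hw⟩) ≤ dist (u n) f := by
    rw [dist_comm]; exact ContinuousMap.dist_apply_le_dist _
  have h3 : ((u n) ⟨w,hw⟩) = (q n).eval w := by
    rw [← hq n]
    simp [Polynomial.toContinuousMapOnAlgHom_apply, Polynomial.toContinuousMapOn_apply,
      Polynomial.toContinuousMap_apply]
  rw [Fext_apply f hw, ← h3]
  exact lt_of_le_of_lt (h2.trans h1.le) (by linarith)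

lemma Fext_diffOn (f : C(K,ℂ)) (hf : f ∈ Apol) :
    DifferentiableOn ℂ (Fext f) (ball (0:ℂ) 1) := by
  obtain ⟨q, hq⟩ := exists_poly_unif f hf
  exact ((hq.mono ball_subset_closedBall).tendstoLocallyUniformlyOn).differentiableOn
    (Eventually.of_forall fun n => (Polynomial.differentiable _).differentiableOn) isOpen_ball

lemma mem_Apol_of_unif {H : ℂ → ℂ} (hc : ContinuousOn H K) (q : ℕ → Polynomial ℂ)
    (hq : TendstoUniformlyOn (fun n z => (q n).eval z) H atTop K) :
    ∃ h : C(K,ℂ), h ∈ Apol ∧ (∀ w : K, h w = H w) ∧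
      Tendsto (fun n => (q n).toContinuousMapOn K) atTop (𝓝 h) := by
  set h : C(K, ℂ) := ⟨K.restrict H, hc.restrict⟩ with hh
  have ht : Tendsto (fun n => (q n).toContinuousMapOn K) atTop (𝓝 h) := by
    rw [Metric.tendsto_atTop]
    intro ε hε
    obtain ⟨N, hN⟩ := eventually_atTop.mp ((Metric.tendstoUniformlyOn_iff.mp hq) (ε/2) (by positivity))
    refine ⟨N, fun n hn => ?_⟩
    have : dist ((q n).toContinuousMapOn K) h ≤ ε/2 := by
      rw [ContinuousMap.dist_le (by positivity)]
      intro w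
      have := hN n hn w w.2
      rw [dist_comm] at this
      exact this.le
    linarith
  refine ⟨h, ?_, fun w => rfl, ht⟩
  have : h ∈ closure ((LinearMap.range
      (Polynomial.toContinuousMapOnAlgHom (R := ℂ) K).toLinearMap :
        Submodule ℂ C(K,ℂ)) : Set C(K,ℂ)) :=
    mem_closure_of_tendsto ht (Eventually.of_forall fun n => by
      simp only [SetLike.mem_coe, LinearMap.mem_range]
      exact ⟨q n, rfl⟩)
  rw [Apol, ← SetLike.mem_coe, Submodule.topologicalClosure_coe]
  exact this

end

lemma key {X : Type*} [NormedAddCommGroup X] [NormedSpace ℂ X] [CompleteSpace X]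
    (J : X →ₗ[ℂ] (ℂ → ℂ))
    (hA : ∀ f : ℂ → ℂ, ContinuousOn f (closedBall (0:ℂ) 1) →
      DifferentiableOn ℂ f (ball (0:ℂ) 1) →
      ∃ x : X, ∀ z ∈ ball (0:ℂ) 1, J x z = f z)
    (heval : ∀ z ∈ ball (0:ℂ) 1, ∃ Kv : ℝ, ∀ x : X, ‖J x z‖ ≤ Kv * ‖x‖)
    (x0 : X) (H : ℂ → ℂ) (R : ℝ) (hR : 1 < R)
    (hH : DifferentiableOn ℂ H (ball (0:ℂ) R))
    (hJx0 : ∀ z ∈ ball (0:ℂ) 1, J x0 z = H z) :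
    x0 ∈ closure {x : X | ∃ q : Polynomial ℂ,
      ∀ z ∈ ball (0:ℂ) 1, J x z = Polynomial.eval z q} := by
  classical
  -- the kernel of evaluation on the ball
  set N : Submodule ℂ X :=
    { carrier := {x : X | ∀ z ∈ ball (0:ℂ) 1, J x z = 0}
      add_mem' := by
        intro a b ha hb z hz
        rw [map_add, Pi.add_apply, ha z hz, hb z hz, add_zero]
      zero_mem' := by intro z hz; rw [map_zero]; rfl
      smul_mem' := by
        intro c a ha z hz
        rw [_root_.map_smul, Pi.smul_apply, ha z hz, smul_zero] } with hNdef
  have hNmem : ∀ x : X, x ∈ N ↔ ∀ z ∈ ball (0:ℂ) 1, J x z = 0 := fun x => Iff.rfl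
  -- continuity of evaluations
  have hcont : ∀ z ∈ ball (0:ℂ) 1, Continuous fun x : X => J x z := by
    intro z hz
    obtain ⟨Kz, hKz⟩ := heval z hz
    exact (LinearMap.mkContinuous ((LinearMap.proj z).comp J) Kz
      (fun x => by simpa using hKz x)).continuous
  haveI hNc : IsClosed (N : Set X) := by
    have : (N : Set X) = ⋂ z ∈ ball (0:ℂ) 1, {x : X | J x z = 0} := by
      ext x
      simp only [Set.mem_iInter, SetLike.mem_coe, hNmem]
      rfl
    rw [this]
    exact isClosed_biInter fun z hz =>
      isClosed_singleton.preimage (hcont z hz)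
  haveI : CompleteSpace ↥Apol :=
    (Submodule.isClosed_topologicalClosure _).completeSpace_coe
  -- the lift of the inclusion to the quotient
  have hex : ∀ f : ↥Apol, ∃ x : X, ∀ z ∈ ball (0:ℂ) 1, J x z = Fext f.1 z :=
    fun f => hA (Fext f.1) (Fext_continuousOn f.1) (Fext_diffOn f.1 f.2)
  choose xof hxof using hex
  have mk_eq : ∀ a b : X, (∀ z ∈ ball (0:ℂ) 1, J a z = J b z) →
      (Submodule.Quotient.mk a : X ⧸ N) = Submodule.Quotient.mk b := by
    intro a b hab
    rw [Submodule.Quotient.eq]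
    intro z hz
    rw [map_sub, Pi.sub_apply, hab z hz, sub_self]
  set T : ↥Apol →ₗ[ℂ] X ⧸ N :=
    { toFun := fun f => Submodule.Quotient.mk (xof f)
      map_add' := by
        intro a b
        have : (Submodule.Quotient.mk (xof a) + Submodule.Quotient.mk (xof b) : X ⧸ N)
            = Submodule.Quotient.mk (xof a + xof b) := (Submodule.Quotient.mk_add ..).symm
      -- note: might need different form
        rw [this]
        apply mk_eq
        intro z hz
        have hzK : z ∈ K := ball_subset_closedBall hz
        rw [hxof (a+b) z hz, map_add, Pi.add_apply, hxof a z hz, hxof b z hz,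
          Fext_apply _ hzK, Fext_apply _ hzK, Fext_apply _ hzK]
        simp
      map_smul' := by
        intro c a
        simp only [RingHom.id_apply]
        have : (c • Submodule.Quotient.mk (xof a) : X ⧸ N)
            = Submodule.Quotient.mk (c • xof a) := (Submodule.Quotient.mk_smul ..).symm
        rw [this]
        apply mk_eq
        intro z hz
        have hzK : z ∈ K := ball_subset_closedBall hz
        rw [hxof (c • a) z hz, _root_.map_smul J c (xof a), Pi.smul_apply, hxof a z hz,
          Fext_apply _ hzK, Fext_apply _ hzK]
        simp } with hTdef
  have hTapp : ∀ f : ↥Apol, T f = Submodule.Quotient.mk (xof f) := fun f => rfl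
  -- closed graph
  have Tcont : Continuous T := by
    apply T.continuous_of_seq_closed_graph
    intro u f y hu hTy
    obtain ⟨xy, hxy⟩ := Submodule.Quotient.mk_surjective N y
    have hdist : Tendsto (fun n => ‖T (u n) - y‖) atTop (𝓝 0) := by
      have := tendsto_iff_norm_sub_tendsto_zero.mp hTy
      simpa using this
    have hrep : ∀ n : ℕ, ∃ m : X, (Submodule.Quotient.mk m : X ⧸ N) = T (u n) - y ∧
        ‖m‖ < ‖T (u n) - y‖ + 1/(n+1) := fun n =>
      Submodule.Quotient.norm_mk_lt _ (by positivity)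
    choose m hm hmlt using hrep
    have hm0 : Tendsto (fun n => ‖m n‖) atTop (𝓝 0) := by
      have hb : Tendsto (fun n : ℕ => ‖T (u n) - y‖ + 1/(n+1)) atTop (𝓝 (0+0)) :=
        hdist.add tendsto_one_div_add_atTop_nhds_zero_nat
      rw [add_zero] at hb
      exact squeeze_zero (fun n => norm_nonneg _) (fun n => (hmlt n).le) hb
    have hpt : ∀ z ∈ ball (0:ℂ) 1, J xy z = Fext f.1 z := by
      intro z hz
      have hzK : z ∈ K := ball_subset_closedBall hz
      obtain ⟨Kz, hKz⟩ := heval z hz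
      have hJm : ∀ n, J (m n) z = J (xof (u n)) z - J xy z := by
        intro n
        have hq : (Submodule.Quotient.mk (m n) : X ⧸ N)
            = Submodule.Quotient.mk (xof (u n) - xy) := by
          rw [hm n, ← hxy, hTapp, Submodule.Quotient.mk_sub]
        have hmem := (Submodule.Quotient.eq N).mp hq
        have := (hNmem _).mp hmem z hz
        rw [map_sub, Pi.sub_apply, map_sub, Pi.sub_apply] at this
        have := sub_eq_zero.mp this
        rw [this]
      have h1 : Tendsto (fun n => J (m n) z) atTop (𝓝 0) := by
        rw [tendsto_zero_iff_norm_tendsto_zero]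
        have hb : Tendsto (fun n => Kz * ‖m n‖) atTop (𝓝 (Kz * 0)) := hm0.const_mul Kz
        rw [mul_zero] at hb
        exact squeeze_zero (fun n => norm_nonneg _)
          (fun n => by simpa using hKz (m n)) hb
      have h2 : Tendsto (fun n => J (xof (u n)) z) atTop (𝓝 (f.1 ⟨z, hzK⟩)) := by
        have heq : (fun n => J (xof (u n)) z) = fun n => ((u n : ↥Apol) : C(K,ℂ)) ⟨z, hzK⟩ := by
          funext n
          rw [hxof (u n) z hz, Fext_apply _ hzK]
        rw [heq]
        have hcc : Tendsto (fun n => ((u n : ↥Apol) : C(K,ℂ))) atTop (𝓝 (f : C(K,ℂ))) :=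
          (continuous_subtype_val.tendsto _).comp hu
        exact ((continuous_eval_const (⟨z, hzK⟩ : K)).tendsto _).comp hcc
      have h3 : Tendsto (fun n => J (xof (u n)) z - J xy z) atTop
          (𝓝 (f.1 ⟨z, hzK⟩ - J xy z)) := h2.sub_const _
      have h4 : Tendsto (fun n => J (m n) z) atTop (𝓝 (f.1 ⟨z, hzK⟩ - J xy z)) := by
        rw [show (fun n => J (m n) z) = fun n => J (xof (u n)) z - J xy z from funext hJm]
        exact h3
      have h5 := tendsto_nhds_unique h1 h4
      rw [Fext_apply _ hzK]
      have := sub_eq_zero.mp h5.symm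
      rw [this]
    rw [← hxy, hTapp]
    exact mk_eq xy (xof f) (fun z hz => by rw [hpt z hz, hxof f z hz])
  -- now the approximation argument
  obtain ⟨q, hq⟩ := poly_approx hR hH
  have hHc : ContinuousOn H K := hH.continuousOn.mono (closedBall_subset_ball hR)
  obtain ⟨hk, hkApol, hkval, hkt⟩ := mem_Apol_of_unif hHc q hq
  have hmemq : ∀ n, ((q n).toContinuousMapOn K) ∈ Apol := fun n =>
    Submodule.le_topologicalClosure _ (LinearMap.mem_range_self _ _)
  set uq : ℕ → ↥Apol := fun n => ⟨_, hmemq n⟩ with huqdef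
  have huq : Tendsto uq atTop (𝓝 (⟨hk, hkApol⟩ : ↥Apol)) := by
    rw [tendsto_subtype_rng]
    exact hkt
  have hTq : Tendsto (fun n => T (uq n)) atTop (𝓝 (T ⟨hk, hkApol⟩)) :=
    ((Tcont.tendsto _).comp huq)
  have hTh : T ⟨hk, hkApol⟩ = Submodule.Quotient.mk x0 := by
    rw [hTapp]
    apply mk_eq
    intro z hz
    have hzK : z ∈ K := ball_subset_closedBall hz
    rw [hxof _ z hz, Fext_apply _ hzK, hkval ⟨z, hzK⟩, hJx0 z hz]
  rw [hTh] at hTq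
  have hd0 : Tendsto (fun n => ‖T (uq n) - Submodule.Quotient.mk x0‖) atTop (𝓝 0) := by
    have := tendsto_iff_norm_sub_tendsto_zero.mp hTq
    simpa using this
  have hrep : ∀ n : ℕ, ∃ v : X, (Submodule.Quotient.mk v : X ⧸ N)
      = T (uq n) - Submodule.Quotient.mk x0 ∧
      ‖v‖ < ‖T (uq n) - Submodule.Quotient.mk x0‖ + 1/(n+1) := fun n =>
    Submodule.Quotient.norm_mk_lt _ (by positivity)
  choose v hv hvlt using hrep
  have hv0 : Tendsto (fun n => ‖v n‖) atTop (𝓝 0) := by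
    have hb : Tendsto (fun n : ℕ => ‖T (uq n) - Submodule.Quotient.mk x0‖ + 1/(n+1))
        atTop (𝓝 (0+0)) := hd0.add tendsto_one_div_add_atTop_nhds_zero_nat
    rw [add_zero] at hb
    exact squeeze_zero (fun n => norm_nonneg _) (fun n => (hvlt n).le) hb
  apply mem_closure_of_tendsto (f := fun n => x0 + v n) (b := atTop)
  · rw [tendsto_iff_norm_sub_tendsto_zero]
    simpa using hv0
  · refine Eventually.of_forall fun n => ⟨q n, fun z hz => ?_⟩
    have hzK : z ∈ K := ball_subset_closedBall hz
    have hq2 : (Submodule.Quotient.mk (v n) : X ⧸ N)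
        = Submodule.Quotient.mk (xof (uq n) - x0) := by
      rw [hv n, hTapp, Submodule.Quotient.mk_sub]
    have hmem := (Submodule.Quotient.eq N).mp hq2
    have hz0 := (hNmem _).mp hmem z hz
    rw [map_sub, Pi.sub_apply, map_sub, Pi.sub_apply] at hz0
    have hveq := sub_eq_zero.mp hz0
    have hxq : J (xof (uq n)) z = (q n).eval z := by
      rw [hxof (uq n) z hz, Fext_apply _ hzK]
      simp [huqdef, Polynomial.toContinuousMapOn_apply, Polynomial.toContinuousMap_apply]
    rw [map_add, Pi.add_apply, hveq, hxq]
    ring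


end Stmt17Aux

open Filter Topology in
theorem stmt17 {X : Type*} [NormedAddCommGroup X] [NormedSpace ℂ X] [CompleteSpace X]
    (J : X →ₗ[ℂ] (ℂ → ℂ)) (C : ℝ) (hC : 0 < C)
    -- the elements of X are analytic on the disc
    (hAnal : ∀ x : X, DifferentiableOn ℂ (J x) (ball (0:ℂ) 1))
    -- the disc algebra is contained in X
    (hA : ∀ f : ℂ → ℂ, ContinuousOn f (closedBall (0:ℂ) 1) →
      DifferentiableOn ℂ f (ball (0:ℂ) 1) →
      ∃ x : X, ∀ z ∈ ball (0:ℂ) 1, J x z = f z)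
    -- closed under dilations, with uniform norm bound C
    (hdil : ∀ x : X, ∀ r : ℝ, 0 < r → r < 1 →
      ∃ xr : X, (∀ z ∈ ball (0:ℂ) 1, J xr z = J x ((r:ℂ) * z)) ∧ ‖xr‖ ≤ C * ‖x‖)
    -- bounded point evaluations
    (heval : ∀ z ∈ ball (0:ℂ) 1, ∃ K : ℝ, ∀ x : X, ‖J x z‖ ≤ K * ‖x‖)
    (g : ℂ → ℂ) (hg : DifferentiableOn ℂ g (ball (0:ℂ) 1)) :
    ((∃ M : ℝ, ∀ x : X, ∀ z ∈ ball (0:ℂ) 1, ‖Tg g (J x) z‖ ≤ M * ‖x‖) ↔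
      (∃ M : ℝ, ∀ x ∈ closure {x : X | ∃ q : Polynomial ℂ,
          ∀ z ∈ ball (0:ℂ) 1, J x z = Polynomial.eval z q},
        ∀ z ∈ ball (0:ℂ) 1, ‖Tg g (J x) z‖ ≤ M * ‖x‖)) ∧
    (∀ M : ℝ, 0 ≤ M →
      (∀ x ∈ closure {x : X | ∃ q : Polynomial ℂ,
          ∀ z ∈ ball (0:ℂ) 1, J x z = Polynomial.eval z q},
        ∀ z ∈ ball (0:ℂ) 1, ‖Tg g (J x) z‖ ≤ M * ‖x‖) →
      ∀ x : X, ∀ z ∈ ball (0:ℂ) 1, ‖Tg g (J x) z‖ ≤ C * M * ‖x‖) := by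
  have main : ∀ M : ℝ, 0 ≤ M →
      (∀ x ∈ closure {x : X | ∃ q : Polynomial ℂ,
          ∀ z ∈ ball (0:ℂ) 1, J x z = Polynomial.eval z q},
        ∀ z ∈ ball (0:ℂ) 1, ‖Tg g (J x) z‖ ≤ M * ‖x‖) →
      ∀ x : X, ∀ z ∈ ball (0:ℂ) 1, ‖Tg g (J x) z‖ ≤ C * M * ‖x‖ := by
    intro M hM hMcl x z hz
    rw [mem_ball, dist_zero_right] at hz
    -- continuity facts
    have hg' : ContinuousOn (deriv g) (ball (0:ℂ) 1) :=
      ((hg.analyticOnNhd isOpen_ball).deriv).continuousOn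
    have hJxc : ContinuousOn (J x) (ball (0:ℂ) 1) := (hAnal x).continuousOn
    have hzball : closedBall (0:ℂ) (‖z‖) ⊆ ball (0:ℂ) 1 := by
      intro w hw
      rw [mem_closedBall, dist_zero_right] at hw
      rw [mem_ball, dist_zero_right]
      exact lt_of_le_of_lt hw hz
    obtain ⟨B1, hB1⟩ := (isCompact_closedBall (0:ℂ) (‖z‖)).exists_bound_of_continuousOn
      (hJxc.mono hzball)
    obtain ⟨B2, hB2⟩ := (isCompact_closedBall (0:ℂ) (‖z‖)).exists_bound_of_continuousOn
      (hg'.mono hzball)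
    have hB1nn : 0 ≤ B1 :=
      (norm_nonneg _).trans (hB1 0 (mem_closedBall_self (norm_nonneg z)))
    have hB2nn : 0 ≤ B2 :=
      (norm_nonneg _).trans (hB2 0 (mem_closedBall_self (norm_nonneg z)))
    -- dilation radii
    set r : ℕ → ℝ := fun n => ((n:ℝ)+1)/((n:ℝ)+2) with hrdef
    have hr0 : ∀ n, 0 < r n := fun n => by positivity
    have hr1 : ∀ n, r n < 1 := fun n => by
      rw [hrdef, div_lt_one (by positivity)]; linarith
    have hrt : Tendsto r atTop (𝓝 1) := by
      have h1 : ∀ n : ℕ, r n = 1 - 1/((n:ℝ)+1+1) := by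
        intro n
        have hne : ((n:ℝ)+2) ≠ 0 := by positivity
        rw [hrdef]
        rw [show (n:ℝ)+1+1 = (n:ℝ)+2 by ring, one_sub_div hne]
        congr 1
        ring
      rw [funext h1]
      have h2 : Tendsto (fun n : ℕ => 1/((n:ℝ)+1+1)) atTop (𝓝 0) := by
        apply squeeze_zero (fun n => by positivity) (fun n => ?_)
          tendsto_one_div_add_atTop_nhds_zero_nat
        apply div_le_div_of_nonneg_left one_pos.le (by positivity)
        linarith
      have := (tendsto_const_nhds (x := (1:ℝ)) (f := atTop (α := ℕ))).sub h2
      simpa using this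
    -- dilations
    choose xr hxr hxrn using fun n => hdil x (r n) (hr0 n) (hr1 n)
    -- each dilation is in the closure of the polynomials
    have hcl : ∀ n, xr n ∈ closure {x : X | ∃ q : Polynomial ℂ,
        ∀ z ∈ ball (0:ℂ) 1, J x z = Polynomial.eval z q} := by
      intro n
      apply Stmt17Aux.key J hA heval (xr n) (fun w => J x (((r n : ℝ):ℂ) * w)) (1/(r n))
        ((one_lt_one_div (hr0 n) (hr1 n)))
      · apply DifferentiableOn.comp (hAnal x)
          ((differentiable_const _).mul differentiable_id).differentiableOn
        intro w hw
        rw [mem_ball, dist_zero_right] at hw ⊢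
        show ‖((r n : ℝ):ℂ) * w‖ < 1
        rw [norm_mul]
        have : ‖((r n : ℝ):ℂ)‖ = r n := by
          rw [Complex.norm_real, Real.norm_eq_abs, abs_of_pos (hr0 n)]
        rw [this]
        calc r n * ‖w‖ < r n * (1/(r n)) :=
              mul_lt_mul_of_pos_left hw (hr0 n)
        _ = 1 := by field_simp [(hr0 n).ne']
      · exact hxr n
    -- integrand facts
    set F : ℕ → ℝ → ℂ := fun n t => J x (((r n : ℝ):ℂ) * ((t:ℂ) * z)) * deriv g ((t:ℂ) * z)
      with hFdef
    have htz : ∀ t : ℝ, t ∈ Set.Icc (0:ℝ) 1 → (t:ℂ) * z ∈ closedBall (0:ℂ) (‖z‖) := by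
      intro t ht
      rw [mem_closedBall, dist_zero_right, norm_mul, Complex.norm_real, Real.norm_eq_abs,
        abs_of_nonneg ht.1]
      nlinarith [norm_nonneg z, ht.2]
    have hrtz : ∀ n, ∀ t : ℝ, t ∈ Set.Icc (0:ℝ) 1 →
        ((r n : ℝ):ℂ) * ((t:ℂ) * z) ∈ closedBall (0:ℂ) (‖z‖) := by
      intro n t ht
      have h1 := htz t ht
      rw [mem_closedBall, dist_zero_right] at h1 ⊢
      rw [norm_mul, Complex.norm_real, Real.norm_eq_abs, abs_of_pos (hr0 n)]
      nlinarith [norm_nonneg ((t:ℂ)*z), hr1 n, hr0 n]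
    have hIoc : Set.uIoc (0:ℝ) 1 ⊆ Set.Icc (0:ℝ) 1 := by
      rw [Set.uIoc_of_le zero_le_one]
      exact Set.Ioc_subset_Icc_self
    have hFcont : ∀ n, ContinuousOn (F n) (Set.Icc (0:ℝ) 1) := by
      intro n
      apply ContinuousOn.mul
      · apply hJxc.comp
        · exact (continuous_const.mul (Complex.continuous_ofReal.mul continuous_const)).continuousOn
        · intro t ht
          exact hzball (hrtz n t ht)
      · apply hg'.comp
        · exact (Complex.continuous_ofReal.mul continuous_const).continuousOn
        · intro t ht
          exact hzball (htz t ht)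
    -- dominated convergence
    have htend : Tendsto (fun n => ∫ t in (0:ℝ)..1, F n t) atTop
        (𝓝 (∫ t in (0:ℝ)..1, J x ((t:ℂ) * z) * deriv g ((t:ℂ) * z))) := by
      apply intervalIntegral.tendsto_integral_filter_of_dominated_convergence (fun _ => B1 * B2)
      · exact Eventually.of_forall fun n =>
          ((hFcont n).mono hIoc).aestronglyMeasurable measurableSet_uIoc
      · refine Eventually.of_forall fun n => ae_of_all _ fun t ht => ?_
        have ht' := hIoc ht
        rw [hFdef]
        simp only [norm_mul]
        exact mul_le_mul (hB1 _ (hrtz n t ht')) (hB2 _ (htz t ht')) (norm_nonneg _) hB1nn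
      · exact intervalIntegrable_const
      · refine ae_of_all _ fun t ht => ?_
        have ht' := hIoc ht
        have h1 : Tendsto (fun n => ((r n : ℝ):ℂ)) atTop (𝓝 1) := by
          have := (Complex.continuous_ofReal.tendsto 1).comp hrt
          exact this
        have h2 : Tendsto (fun n => ((r n : ℝ):ℂ) * ((t:ℂ) * z)) atTop (𝓝 ((t:ℂ) * z)) := by
          have := h1.mul_const ((t:ℂ) * z)
          simpa using this
        have h3 : ContinuousAt (J x) ((t:ℂ) * z) :=
          hJxc.continuousAt (isOpen_ball.mem_nhds (hzball (htz t ht')))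
        exact ((h3.tendsto.comp h2).mul_const _)
    -- conclude
    have habs : Tendsto (fun n => ‖z * ∫ t in (0:ℝ)..1, F n t‖) atTop
        (𝓝 (‖Tg g (J x) z‖)) := by
      have h4 : Tendsto (fun n => z * ∫ t in (0:ℝ)..1, F n t) atTop (𝓝 (Tg g (J x) z)) := by
        rw [Tg]
        exact htend.const_mul z
      exact (continuous_norm.tendsto _).comp h4
    apply le_of_tendsto habs
    refine Eventually.of_forall fun n => ?_
    have hint : Tg g (J (xr n)) z = z * ∫ t in (0:ℝ)..1, F n t := by
      rw [Tg]
      congr 1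
      apply intervalIntegral.integral_congr
      intro t ht
      rw [Set.uIcc_of_le zero_le_one] at ht
      have htball : (t:ℂ) * z ∈ ball (0:ℂ) 1 := hzball (htz t ht)
      rw [hFdef]
      simp only
      rw [hxr n _ htball]
    have hb := hMcl (xr n) (hcl n) z (by rw [mem_ball, dist_zero_right]; exact hz)
    rw [hint] at hb
    calc ‖z * ∫ t in (0:ℝ)..1, F n t‖ ≤ M * ‖xr n‖ := hb
    _ ≤ M * (C * ‖x‖) := mul_le_mul_of_nonneg_left (hxrn n) hM
    _ = C * M * ‖x‖ := by ring
  constructor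
  · constructor
    · rintro ⟨M, hM⟩
      exact ⟨M, fun x _ z hz => hM x z hz⟩
    · rintro ⟨M, hM⟩
      refine ⟨C * max M 0, main (max M 0) (le_max_right _ _) ?_⟩
      intro x hx z hz
      exact (hM x hx z hz).trans
        (mul_le_mul_of_nonneg_right (le_max_left _ _) (norm_nonneg _))
  · exact main
end
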